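/- arXiv:2007.00918 — 7 statements merged into one kernel-verified Lean document; each statement's English description precedes it below -/
import Mathlib

section
/- Let b : ℝ² → ℝ² be a vector field (identified with a complex-valued function) differentiable at a point z. Then, writing ∂b(z) and ∂̄b(z) for the complex derivatives, for all nonzero h,k ∈ ℂ one has ⟨b(z+h) − b(z), h̄⟩/|h|² − ⟨b(z+k) − b(z), k̄⟩/|k|² = Re(∂b(z)(h²/|h|² − k²/|k|²)) + o(1) as |h| = |k| → 0; consequently the limsup as |h| = |k| → 0 of the supremum of the left-hand side over all such h, k equals 2|∂b(z)|. -/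
open Filter

lemma exists_unit_sq (p : ℂ) : ∃ u : ℂ, ‖u‖ = 1 ∧ (p * u ^ 2).re = ‖p‖ := by
  rcases eq_or_ne p 0 with hp | hp
  · exact ⟨1, by simp [hp]⟩
  · have hpn : ‖p‖ ≠ 0 := norm_ne_zero_iff.mpr hp
    obtain ⟨u, hu⟩ := IsAlgClosed.exists_pow_nat_eq (k := ℂ) (n := 2) ((starRingEnd ℂ) p / (‖p‖ : ℂ)) (by norm_num)
    have h2 : ‖u‖ ^ 2 = 1 := by
      rw [← norm_pow, hu]
      rw [norm_div, RCLike.norm_conj, Complex.norm_real, Real.norm_eq_abs,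
        abs_of_nonneg (norm_nonneg p), div_self hpn]
    have hun : ‖u‖ = 1 := by nlinarith [norm_nonneg u]
    refine ⟨u, hun, ?_⟩
    rw [hu]
    have hpc : p * ((starRingEnd ℂ) p / (‖p‖ : ℂ)) = ((‖p‖ : ℝ) : ℂ) := by
      rw [mul_div_assoc', Complex.mul_conj, Complex.normSq_eq_norm_sq]
      norm_cast
      rw [sq, mul_div_assoc, div_self hpn, mul_one]
    rw [hpc, Complex.ofReal_re]


/-- If `b : ℂ → ℂ` is (real-)differentiable at `z`, then the limsup as
`|h| = |k| → 0` of the supremum over such `h, k` of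
`|⟨b(z+h)−b(z), h̄⟩/|h|² − ⟨b(z+k)−b(z), k̄⟩/|k|²|` equals `2|∂b(z)|`,
where `∂b(z) = (L 1 − i·L i)/2` with `L = Db(z)` and
`⟨w, h̄⟩ = Re(w·h)`. -/
theorem barQ_pointwise_limsup (b : ℂ → ℂ) (z : ℂ) (hb : DifferentiableAt ℝ b z) :
    Filter.limsup
      (fun r : ℝ => sSup {v : ℝ | ∃ h k : ℂ, ‖h‖ = r ∧ ‖k‖ = r ∧
        v = |((b (z + h) - b z) * h).re / ‖h‖ ^ 2
              - ((b (z + k) - b z) * k).re / ‖k‖ ^ 2|})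
      (nhdsWithin 0 (Set.Ioi 0))
    = 2 * ‖(fderiv ℝ b z 1 - Complex.I * fderiv ℝ b z Complex.I) / 2‖ := by
  set L := fderiv ℝ b z with hLdef
  set p : ℂ := (L 1 - Complex.I * L Complex.I) / 2 with hpdef
  set q : ℂ := (L 1 + Complex.I * L Complex.I) / 2 with hqdef
  have hLin : ∀ h : ℂ, L h = p * h + q * (starRingEnd ℂ) h := by
    intro h
    have e1 : (h : ℂ) = (h.re : ℂ) + (h.im : ℂ) * Complex.I := (Complex.re_add_im h).symm
    have e2 : (starRingEnd ℂ) h = (h.re : ℂ) - (h.im : ℂ) * Complex.I := by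
      simp [Complex.ext_iff]
    have e3 : L h = (h.re : ℝ) • L 1 + (h.im : ℝ) • L Complex.I := by
      conv_lhs => rw [e1]
      have : ((h.re : ℂ) + (h.im : ℂ) * Complex.I)
          = (h.re : ℝ) • (1 : ℂ) + (h.im : ℝ) • Complex.I := by
        simp [Complex.real_smul]
      rw [this, map_add, map_smul, map_smul]
    rw [e3, Complex.real_smul, Complex.real_smul, hpdef, hqdef]
    linear_combination (-((L 1 - Complex.I * L Complex.I) / 2)) * e1
      + (-((L 1 + Complex.I * L Complex.I) / 2)) * e2
      + ((h.im : ℂ) * L Complex.I) * Complex.I_sq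
  have hlo : (fun h : ℂ => b (z + h) - b z - L h) =o[nhds 0] fun h : ℂ => h :=
    hasFDerivAt_iff_isLittleO_nhds_zero.mp hb.hasFDerivAt
  have hc : Tendsto
      (fun r : ℝ => sSup {v : ℝ | ∃ h k : ℂ, ‖h‖ = r ∧ ‖k‖ = r ∧
        v = |((b (z + h) - b z) * h).re / ‖h‖ ^ 2
              - ((b (z + k) - b z) * k).re / ‖k‖ ^ 2|})
      (nhdsWithin 0 (Set.Ioi 0)) (nhds (2 * ‖p‖)) := by
    rw [Metric.tendsto_nhds]
    intro ε hε
    have hε4 : (0:ℝ) < ε/4 := by linarith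
    obtain ⟨δ, hδpos, hδ⟩ : ∃ δ > 0, ∀ h : ℂ, dist h 0 < δ →
        ‖b (z + h) - b z - L h‖ ≤ ε/4 * ‖h‖ := by
      have := hlo.def hε4
      rw [Metric.eventually_nhds_iff] at this
      obtain ⟨δ, hδ, H⟩ := this
      exact ⟨δ, hδ, fun h hh => H hh⟩
    filter_upwards [Ioo_mem_nhdsGT_of_mem (Set.left_mem_Ico.mpr hδpos)] with r hr
    have hrpos : (0:ℝ) < r := hr.1
    have hr2 : (0:ℝ) < r ^ 2 := by positivity
    set S : Set ℝ := {v : ℝ | ∃ h k : ℂ, ‖h‖ = r ∧ ‖k‖ = r ∧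
        v = |((b (z + h) - b z) * h).re / ‖h‖ ^ 2
              - ((b (z + k) - b z) * k).re / ‖k‖ ^ 2|} with hSdef
    have key : ∀ h : ℂ, ‖h‖ = r →
        |((b (z + h) - b z) * h).re / ‖h‖ ^ 2 - ((p * h ^ 2).re / r ^ 2 + q.re)| ≤ ε/4 := by
      intro h hh
      set E : ℂ := b (z + h) - b z - L h with hE
      have hbz : b (z + h) - b z = p * h + q * (starRingEnd ℂ) h + E := by
        rw [hE, hLin]; ring
      have hch : (starRingEnd ℂ) h * h = ((r ^ 2 : ℝ) : ℂ) := by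
        rw [mul_comm, Complex.mul_conj]
        norm_cast
        rw [← Complex.sq_norm, hh]
      have hmul : (b (z + h) - b z) * h = p * h ^ 2 + q * ((r ^ 2 : ℝ) : ℂ) + E * h := by
        rw [hbz, ← hch]; ring
      have hre : ((b (z + h) - b z) * h).re = (p * h ^ 2).re + q.re * r ^ 2 + (E * h).re := by
        rw [hmul]
        simp only [Complex.add_re, Complex.mul_re, Complex.ofReal_re, Complex.ofReal_im]
        ring
      have hEb : ‖E‖ ≤ ε/4 * r := by
        have := hδ h (by rw [dist_zero_right, hh]; exact hr.2)
        rw [hh] at this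
        exact this
      have h1 : |(E * h).re| ≤ ε/4 * r ^ 2 := by
        calc |(E * h).re| ≤ ‖E * h‖ := by
              exact Complex.abs_re_le_norm _
          _ = ‖E‖ * r := by rw [norm_mul, hh]
          _ ≤ (ε/4 * r) * r := by
              have := hEb
              nlinarith [hrpos]
          _ = ε/4 * r ^ 2 := by ring
      have heq : ((b (z + h) - b z) * h).re / ‖h‖ ^ 2 - ((p * h ^ 2).re / r ^ 2 + q.re)
          = (E * h).re / r ^ 2 := by
        rw [hh, hre]
        field_simp
        ring
      rw [heq, abs_div, abs_of_pos hr2, div_le_iff₀ hr2]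
      exact h1
    have hP : ∀ h : ℂ, ‖h‖ = r → |(p * h ^ 2).re / r ^ 2| ≤ ‖p‖ := by
      intro h hh
      rw [abs_div, abs_of_pos hr2, div_le_iff₀ hr2]
      calc |(p * h ^ 2).re| ≤ ‖p * h ^ 2‖ := by
            exact Complex.abs_re_le_norm _
        _ = ‖p‖ * r ^ 2 := by rw [norm_mul, norm_pow, hh]
    have hub : ∀ v ∈ S, v ≤ 2 * ‖p‖ + ε/2 := by
      rintro v ⟨h, k, hh, hk, rfl⟩
      obtain ⟨a1, a2⟩ := abs_le.mp (key h hh)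
      obtain ⟨b1, b2⟩ := abs_le.mp (key k hk)
      obtain ⟨c1, c2⟩ := abs_le.mp (hP h hh)
      obtain ⟨d1, d2⟩ := abs_le.mp (hP k hk)
      rw [abs_le]
      constructor <;> linarith
    obtain ⟨u, hu1, hu2⟩ := exists_unit_sq p
    set h₀ : ℂ := (r : ℂ) * u with hh₀def
    set k₀ : ℂ := (r : ℂ) * u * Complex.I with hk₀def
    have hh₀ : ‖h₀‖ = r := by
      rw [hh₀def, norm_mul, hu1, mul_one, Complex.norm_real, Real.norm_eq_abs,
        abs_of_pos hrpos]
    have hk₀ : ‖k₀‖ = r := by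
      rw [hk₀def, norm_mul, norm_mul, hu1, Complex.norm_I, mul_one, mul_one,
        Complex.norm_real, Real.norm_eq_abs, abs_of_pos hrpos]
    have hx : (p * h₀ ^ 2).re / r ^ 2 = ‖p‖ := by
      have : p * h₀ ^ 2 = ((r ^ 2 : ℝ) : ℂ) * (p * u ^ 2) := by
        rw [hh₀def]; push_cast; ring
      rw [this, Complex.re_ofReal_mul, hu2, mul_comm, mul_div_assoc, div_self (ne_of_gt hr2),
        mul_one]
    have hy : (p * k₀ ^ 2).re / r ^ 2 = -‖p‖ := by
      have : p * k₀ ^ 2 = ((r ^ 2 : ℝ) : ℂ) * (-(p * u ^ 2)) := by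
        rw [hk₀def]
        have : Complex.I ^ 2 = -1 := Complex.I_sq
        push_cast
        rw [mul_pow, mul_pow, this]
        ring
      rw [this, Complex.re_ofReal_mul, Complex.neg_re, hu2]
      field_simp
    set v₀ : ℝ := |((b (z + h₀) - b z) * h₀).re / ‖h₀‖ ^ 2
        - ((b (z + k₀) - b z) * k₀).re / ‖k₀‖ ^ 2| with hv₀def
    have hmem : v₀ ∈ S := ⟨h₀, k₀, hh₀, hk₀, rfl⟩
    have hlow : 2 * ‖p‖ - ε/2 ≤ v₀ := by
      obtain ⟨a1, a2⟩ := abs_le.mp (key h₀ hh₀)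
      obtain ⟨b1, b2⟩ := abs_le.mp (key k₀ hk₀)
      have hle : ((b (z + h₀) - b z) * h₀).re / ‖h₀‖ ^ 2
          - ((b (z + k₀) - b z) * k₀).re / ‖k₀‖ ^ 2 ≤ v₀ := le_abs_self _
      rw [hx] at a1 a2
      rw [hy] at b1 b2
      linarith
    have hbdd : BddAbove S := ⟨2 * ‖p‖ + ε/2, fun v hv => hub v hv⟩
    have hsle : sSup S ≤ 2 * ‖p‖ + ε/2 := csSup_le ⟨v₀, hmem⟩ hub
    have hsge : 2 * ‖p‖ - ε/2 ≤ sSup S := le_trans hlow (le_csSup hbdd hmem)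
    rw [Real.dist_eq, abs_lt]
    constructor <;> [skip; skip] <;> linarith
  exact hc.limsup_eq
end

section
/- Let b : ℝ² → ℝ² be a smooth (everywhere differentiable) vector field belonging to the class Q̄, i.e. there is C₀ with |⟨b(z+h)−b(z), h̄⟩/|h|² − ⟨b(z+k)−b(z), k̄⟩/|k|²| ≤ C₀ for all z and all h,k with |h|=|k|≠0. Then the complex derivative ∂b is bounded, with ‖∂b‖_{L^∞} ≤ C₀/2. -/
open Filter Topology Complex

/-- Along the ray `t ↦ t • h`, the quotient in the `Q̄` condition tends to the
corresponding expression in the derivative. -/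
lemma barQ_slope_tendsto (b : ℂ → ℂ) (z : ℂ) (hb : DifferentiableAt ℝ b z) (h : ℂ) :
    Tendsto (fun t : ℝ => ((b (z + t • h) - b z) * (t • h)).re / ‖t • h‖ ^ 2)
      (𝓝[≠] (0:ℝ)) (𝓝 ((fderiv ℝ b z h * h).re / ‖h‖ ^ 2)) := by
  have h1 : HasDerivAt (fun t : ℝ => z + t • h) h 0 := by
    simpa using ((hasDerivAt_id (0:ℝ)).smul_const h).const_add z
  have hb' : HasFDerivAt b (fderiv ℝ b z) (z + (0:ℝ) • h) := by
    simpa using hb.hasFDerivAt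
  have hg : HasDerivAt (fun t : ℝ => b (z + t • h)) (fderiv ℝ b z h) 0 :=
    hb'.comp_hasDerivAt 0 h1
  have hs := hasDerivAt_iff_tendsto_slope.mp hg
  have hcont : Tendsto (fun w : ℂ => (w * h).re / ‖h‖ ^ 2) (𝓝 (fderiv ℝ b z h))
      (𝓝 ((fderiv ℝ b z h * h).re / ‖h‖ ^ 2)) := by
    apply Tendsto.div_const
    exact (Complex.continuous_re.comp (continuous_mul_right h)).continuousAt
  refine (hcont.comp hs).congr' ?_
  filter_upwards [self_mem_nhdsWithin] with t ht
  have ht' : (t : ℝ) ≠ 0 := ht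
  have hsl : slope (fun t : ℝ => b (z + t • h)) 0 t
      = (t⁻¹ : ℝ) • (b (z + t • h) - b z) := by
    simp [slope_def_module]
  simp only [Function.comp, hsl]
  have e1 : ∀ Δ : ℂ, ((t⁻¹ : ℝ) • Δ * h).re = t⁻¹ * (Δ * h).re := by
    intro Δ
    rw [Complex.real_smul, mul_assoc]
    simp
  have e2 : ∀ Δ : ℂ, (Δ * (t • h)).re = t * (Δ * h).re := by
    intro Δ
    rw [Complex.real_smul, show Δ * ((t:ℂ) * h) = (t:ℂ) * (Δ * h) by ring]
    simp
  rw [e1, e2, norm_smul]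
  rw [Real.norm_eq_abs, mul_pow, _root_.sq_abs]
  generalize ((b (z + t • h) - b z) * h).re = R
  rw [show t * R / (t ^ 2 * ‖h‖ ^ 2) = t / t ^ 2 * (R / ‖h‖ ^ 2) by ring,
    show t / t ^ 2 = t⁻¹ by rw [pow_two, ← div_div, div_self ht', one_div]]
  ring

lemma barQ_deriv_ineq (b : ℂ → ℂ) (hb : ∀ z, DifferentiableAt ℝ b z) (C₀ : ℝ)
    (hQ : ∀ (z h k : ℂ), ‖h‖ = ‖k‖ → h ≠ 0 →
      |((b (z + h) - b z) * h).re / ‖h‖ ^ 2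
        - ((b (z + k) - b z) * k).re / ‖k‖ ^ 2| ≤ C₀)
    (z h k : ℂ) (hhk : ‖h‖ = ‖k‖) (hh : h ≠ 0) :
    |(fderiv ℝ b z h * h).re / ‖h‖ ^ 2 - (fderiv ℝ b z k * k).re / ‖k‖ ^ 2| ≤ C₀ := by
  have l1 := barQ_slope_tendsto b z (hb z) h
  have l2 := barQ_slope_tendsto b z (hb z) k
  refine le_of_tendsto ((l1.sub l2).abs) ?_
  filter_upwards [self_mem_nhdsWithin] with t ht
  exact hQ z (t • h) (t • k) (by rw [norm_smul, norm_smul, hhk]) (smul_ne_zero ht hh)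

/-- If `b : ℂ → ℂ` is everywhere differentiable and belongs to the class `Q̄`
with constant `C₀`, then `‖∂b‖_∞ ≤ C₀/2`. Here `⟨w, h̄⟩ = Re(w·h)` and
`∂b(z) = (L 1 − i·L i)/2` with `L = Db(z)`. -/
theorem smooth_barQ_bounded_partial (b : ℂ → ℂ) (hb : ∀ z, DifferentiableAt ℝ b z)
    (C₀ : ℝ)
    (hQ : ∀ (z h k : ℂ), ‖h‖ = ‖k‖ → h ≠ 0 →
      |((b (z + h) - b z) * h).re / ‖h‖ ^ 2
        - ((b (z + k) - b z) * k).re / ‖k‖ ^ 2| ≤ C₀) :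
    ∀ z : ℂ, ‖(fderiv ℝ b z 1 - Complex.I * fderiv ℝ b z Complex.I) / 2‖ ≤ C₀ / 2 := by
  intro z
  have hC : 0 ≤ C₀ := by
    have := hQ 0 1 1 rfl one_ne_zero
    simpa using this
  set L := fderiv ℝ b z with hL
  set E : ℂ := L 1 - Complex.I * L Complex.I with hE
  have hnorm : ‖E / 2‖ = ‖E‖ / 2 := by
    rw [norm_div]
    norm_num
  rw [hnorm]
  -- suffices to show ‖E‖ ≤ C₀
  suffices hEC : ‖E‖ ≤ C₀ by linarith
  rcases eq_or_ne E 0 with h0 | h0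
  · simp [h0, hC]
  -- choose a unit vector h with h^2 = conj E / ‖E‖
  have hEn : (‖E‖ : ℝ) ≠ 0 := norm_ne_zero_iff.mpr h0
  set u : ℂ := (starRingEnd ℂ) E / (‖E‖ : ℂ) with hu
  have hu0 : u ≠ 0 := by
    apply div_ne_zero
    · simpa using h0
    · exact_mod_cast hEn
  have huabs : ‖u‖ = 1 := by
    rw [hu, norm_div, Complex.norm_conj, Complex.norm_real, norm_norm, div_self hEn]
  set h : ℂ := Complex.exp (Complex.log u / 2) with hh
  have hsq : h ^ 2 = u := by
    rw [hh, ← Complex.exp_nat_mul, show ((2:ℕ):ℂ) * (Complex.log u / 2) = Complex.log u by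
      push_cast; ring, Complex.exp_log hu0]
  have hhabs : ‖h‖ = 1 := by
    have hlre : (Complex.log u).re = 0 := by
      rw [Complex.log_re, huabs, Real.log_one]
    rw [hh, Complex.norm_exp]
    simp [Complex.div_re, hlre]
  have hh0 : h ≠ 0 := by
    intro hc
    rw [hc] at hhabs
    simp at hhabs
  -- linearity decomposition
  have hLv : ∀ v : ℂ, L v = (v.re : ℂ) * L 1 + (v.im : ℂ) * L Complex.I := by
    intro v
    have hv : v = v.re • (1:ℂ) + v.im • Complex.I := by
      simp [Complex.real_smul, Complex.re_add_im]
    conv_lhs => rw [hv]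
    rw [map_add, map_smul, map_smul]
    simp [Complex.real_smul]
  -- the key algebraic identity
  have hid : L h * h - L (Complex.I * h) * (Complex.I * h) = E * h ^ 2 := by
    rw [hE, hLv h, hLv (Complex.I * h)]
    apply Complex.ext <;>
      simp [Complex.mul_re, Complex.mul_im, pow_two] <;> ring
  -- evaluate Re(E h²)
  have hre2 : (E * h ^ 2).re = ‖E‖ := by
    rw [hsq, hu]
    rw [show E * ((starRingEnd ℂ) E / (‖E‖ : ℂ)) = (E * (starRingEnd ℂ) E) / (‖E‖ : ℂ) by ring,
      Complex.mul_conj]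
    rw [show ((Complex.normSq E : ℂ)) / (‖E‖ : ℂ) = ((Complex.normSq E / ‖E‖ : ℝ) : ℂ) by push_cast; ring]
    rw [Complex.ofReal_re, Complex.normSq_eq_norm_sq, sq,
      mul_div_assoc, div_self hEn, mul_one]
  -- apply the limiting inequality with k = I * h
  have hIh : ‖h‖ = ‖Complex.I * h‖ := by
    rw [norm_mul, Complex.norm_I, one_mul]
  have hkey := barQ_deriv_ineq b hb C₀ hQ z h (Complex.I * h) hIh hh0
  rw [← hIh, hhabs] at hkey
  have : (L h * h).re - (L (Complex.I * h) * (Complex.I * h)).re = ‖E‖ := by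
    rw [← Complex.sub_re, hid, hre2]
  simp only [one_pow, div_one] at hkey
  rw [hL] at this
  rw [this] at hkey
  rwa [_root_.abs_of_nonneg (norm_nonneg E)] at hkey
end

section
/- Let b : ℝ² → ℝ² be differentiable at a point x. Then limsup over |h|,|k| → 0 of sup_{θ ∈ [0,2π]} |⟨b(x+h)−b(x), e^{iθ}k⟩ − ⟨b(x+k)−b(x), e^{iθ}h⟩| / (|h||k|) equals 2|∂b(x)|. -/
open Filter Real

private lemma key_alg (p q u h k : ℂ) :
    ((p*h + q*(starRingEnd ℂ) h) * (starRingEnd ℂ) (u*k)).re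
      - ((p*k + q*(starRingEnd ℂ) k) * (starRingEnd ℂ) (u*h)).re
    = -(2 * (p * (starRingEnd ℂ) u).im * (h * (starRingEnd ℂ) k).im) := by
  simp [Complex.mul_re, Complex.mul_im, Complex.conj_re, Complex.conj_im, map_mul]
  ring

private lemma re_mul_conj_le (z w : ℂ) : |(z * (starRingEnd ℂ) w).re| ≤ ‖z‖ * ‖w‖ := by
  calc |(z * (starRingEnd ℂ) w).re| ≤ ‖z * (starRingEnd ℂ) w‖ :=
        Complex.abs_re_le_norm _
  _ = ‖z‖ * ‖w‖ := by simp [Complex.norm_conj]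

private lemma exp_norm (θ : ℝ) : ‖Complex.exp (θ * Complex.I)‖ = 1 := by
  simp [Complex.norm_exp_ofReal_mul_I]

private lemma Adec (A : ℂ →L[ℝ] ℂ) (h : ℂ) :
    A h = (A 1 - Complex.I * A Complex.I)/2 * h
        + (A 1 + Complex.I * A Complex.I)/2 * (starRingEnd ℂ) h := by
  have key : ∀ a c : ℝ, A ((a:ℂ) + (c:ℂ) * Complex.I)
      = (A 1 - Complex.I * A Complex.I)/2 * ((a:ℂ) + (c:ℂ) * Complex.I)
        + (A 1 + Complex.I * A Complex.I)/2 * (starRingEnd ℂ) ((a:ℂ) + (c:ℂ) * Complex.I) := by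
    intro a c
    have h2 : ((a:ℂ) + (c:ℂ) * Complex.I) = a • (1:ℂ) + c • Complex.I := by
      simp [Complex.real_smul]
    have h3 : A ((a:ℂ) + (c:ℂ) * Complex.I) = (a:ℂ) * A 1 + (c:ℂ) * A Complex.I := by
      rw [h2, map_add, map_smul, map_smul, Complex.real_smul, Complex.real_smul]
    rw [h3, show (starRingEnd ℂ) ((a:ℂ) + (c:ℂ) * Complex.I) = (a:ℂ) - (c:ℂ) * Complex.I by
      simp [Complex.ext_iff]]
    linear_combination ((c:ℂ) * A Complex.I) * Complex.I_sq
  have := key h.re h.im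
  rwa [Complex.re_add_im] at this

private lemma theta_exists (u : ℂ) (hu : ‖u‖ = 1) :
    ∃ θ : ℝ, θ ∈ Set.Icc 0 (2 * Real.pi) ∧ Complex.exp (θ * Complex.I) = u := by
  rcases lt_or_ge u.arg 0 with hlt | hge
  · refine ⟨u.arg + 2 * Real.pi, ⟨by linarith [Complex.neg_pi_lt_arg u],
      by linarith [Complex.arg_le_pi u, Real.pi_pos]⟩, ?_⟩
    push_cast
    rw [add_mul, Complex.exp_add, Complex.exp_two_pi_mul_I, mul_one]
    have := Complex.norm_mul_exp_arg_mul_I u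
    rwa [hu, Complex.ofReal_one, one_mul] at this
  · refine ⟨u.arg, ⟨hge, by linarith [Complex.arg_le_pi u, Real.pi_pos]⟩, ?_⟩
    have := Complex.norm_mul_exp_arg_mul_I u
    rwa [hu, Complex.ofReal_one, one_mul] at this

/-- Deviation of the numerator from its main term. -/
private lemma num_dev (A : ℂ →L[ℝ] ℂ) (u h k Eh Ek : ℂ) :
    |(((A h + Eh) * (starRingEnd ℂ) (u*k)).re - ((A k + Ek) * (starRingEnd ℂ) (u*h)).re)
      - (-(2 * ((A 1 - Complex.I * A Complex.I)/2 * (starRingEnd ℂ) u).im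
            * (h * (starRingEnd ℂ) k).im))|
    ≤ ‖Eh‖ * (‖u‖ * ‖k‖) + ‖Ek‖ * (‖u‖ * ‖h‖) := by
  set p := (A 1 - Complex.I * A Complex.I)/2 with hp
  set q := (A 1 + Complex.I * A Complex.I)/2 with hq
  have expand : ((A h + Eh) * (starRingEnd ℂ) (u*k)).re
        - ((A k + Ek) * (starRingEnd ℂ) (u*h)).re
      = (-(2 * (p * (starRingEnd ℂ) u).im * (h * (starRingEnd ℂ) k).im))
        + ((Eh * (starRingEnd ℂ) (u*k)).re - (Ek * (starRingEnd ℂ) (u*h)).re) := by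
    rw [Adec A h, Adec A k]
    simp only [add_mul, Complex.add_re, ← hp, ← hq]
    have := key_alg p q u h k
    simp only [add_mul, Complex.add_re] at this
    linarith
  rw [expand]
  have e1 := re_mul_conj_le Eh (u*k)
  have e2 := re_mul_conj_le Ek (u*h)
  rw [norm_mul] at e1 e2
  calc |(-(2 * (p * (starRingEnd ℂ) u).im * (h * (starRingEnd ℂ) k).im)
        + ((Eh * (starRingEnd ℂ) (u*k)).re - (Ek * (starRingEnd ℂ) (u*h)).re))
        - (-(2 * (p * (starRingEnd ℂ) u).im * (h * (starRingEnd ℂ) k).im))|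
      = |(Eh * (starRingEnd ℂ) (u*k)).re - (Ek * (starRingEnd ℂ) (u*h)).re| := by ring_nf
  _ ≤ |(Eh * (starRingEnd ℂ) (u*k)).re| + |(Ek * (starRingEnd ℂ) (u*h)).re| := abs_sub _ _
  _ ≤ ‖Eh‖ * (‖u‖ * ‖k‖) + ‖Ek‖ * (‖u‖ * ‖h‖) := add_le_add e1 e2

/-- If `b : ℂ → ℂ` is differentiable at `x`, then the limsup as `|h|, |k| → 0` of
`sup_{θ ∈ [0,2π]} |⟨b(x+h)−b(x), e^{iθ}k⟩ − ⟨b(x+k)−b(x), e^{iθ}h⟩| / (|h||k|)`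
equals `2|∂b(x)|`, where `⟨z,w⟩ = Re(z·conj w)`. -/
theorem R_pointwise_limsup (b : ℂ → ℂ) (x : ℂ) (hb : DifferentiableAt ℝ b x) :
    Filter.limsup
      (fun r : ℝ => sSup {v : ℝ | ∃ (h k : ℂ) (θ : ℝ),
        h ≠ 0 ∧ k ≠ 0 ∧ ‖h‖ ≤ r ∧ ‖k‖ ≤ r ∧ θ ∈ Set.Icc 0 (2 * π) ∧
        v = |((b (x + h) - b x) * (starRingEnd ℂ) (Complex.exp (θ * Complex.I) * k)).re
              - ((b (x + k) - b x) * (starRingEnd ℂ) (Complex.exp (θ * Complex.I) * h)).re|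
            / (‖h‖ * ‖k‖)})
      (nhdsWithin 0 (Set.Ioi 0))
    = 2 * ‖(fderiv ℝ b x 1 - Complex.I * fderiv ℝ b x Complex.I) / 2‖ := by
  classical
  set A := fderiv ℝ b x with hAdef
  set p : ℂ := (A 1 - Complex.I * A Complex.I) / 2 with hpdef
  set E : ℂ → ℂ := fun h => b (x + h) - b x - A h with hEdef
  have hEh : ∀ h : ℂ, b (x + h) - b x = A h + E h := by
    intro h; simp only [hEdef]; ring
  -- little-o control
  have hEsmall : ∀ ε : ℝ, 0 < ε → ∃ δ > 0, ∀ h : ℂ, ‖h‖ < δ → ‖E h‖ ≤ ε * ‖h‖ := by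
    intro ε hε
    have ho : (fun h : ℂ => b (x + h) - b x - A h) =o[nhds 0] fun h => h :=
      hasFDerivAt_iff_isLittleO_nhds_zero.mp hb.hasFDerivAt
    have hev := Asymptotics.isLittleO_iff.mp ho hε
    rcases Metric.eventually_nhds_iff.mp hev with ⟨δ, hδ, hδ'⟩
    exact ⟨δ, hδ, fun h hh => hδ' (by simpa [dist_zero_right] using hh)⟩
  set T : ℝ → Set ℝ := fun r => {v : ℝ | ∃ (h k : ℂ) (θ : ℝ),
        h ≠ 0 ∧ k ≠ 0 ∧ ‖h‖ ≤ r ∧ ‖k‖ ≤ r ∧ θ ∈ Set.Icc 0 (2 * π) ∧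
        v = |((b (x + h) - b x) * (starRingEnd ℂ) (Complex.exp (θ * Complex.I) * k)).re
              - ((b (x + k) - b x) * (starRingEnd ℂ) (Complex.exp (θ * Complex.I) * h)).re|
            / (‖h‖ * ‖k‖)} with hTdef
  -- the main term bound: for any member of T r with control on E we get bounds.
  -- zero is always a member (for r > 0)
  have hzero : ∀ r : ℝ, 0 < r → (0:ℝ) ∈ T r := by
    intro r hr
    refine ⟨(r:ℂ), (r:ℂ), 0, ?_, ?_, ?_, ?_, ?_, ?_⟩
    · exact_mod_cast (ne_of_gt hr)
    · exact_mod_cast (ne_of_gt hr)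
    · simp [Complex.norm_real, abs_of_pos hr]
    · simp [Complex.norm_real, abs_of_pos hr]
    · exact ⟨le_refl 0, by positivity⟩
    · simp
  -- upper bound for members of T r when r < δ
  have hupper : ∀ ε : ℝ, 0 < ε → ∀ δ : ℝ, 0 < δ →
      (∀ h : ℂ, ‖h‖ < δ → ‖E h‖ ≤ ε * ‖h‖) →
      ∀ r : ℝ, 0 < r → r < δ → ∀ v ∈ T r, v ≤ 2 * ‖p‖ + 2 * ε := by
    intro ε hε δ hδ hEδ r hr hrδ v hv
    obtain ⟨h, k, θ, hh0, hk0, hhr, hkr, hθ, hveq⟩ := hv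
    have hhn : 0 < ‖h‖ := norm_pos_iff.mpr hh0
    have hkn : 0 < ‖k‖ := norm_pos_iff.mpr hk0
    set u := Complex.exp ((θ:ℂ) * Complex.I) with hu
    have hun : ‖u‖ = 1 := exp_norm θ
    have hdev := num_dev A u h k (E h) (E k)
    rw [← hEh h, ← hEh k, hun, one_mul, one_mul] at hdev
    have hEhb : ‖E h‖ ≤ ε * ‖h‖ := hEδ h (lt_of_le_of_lt hhr hrδ)
    have hEkb : ‖E k‖ ≤ ε * ‖k‖ := hEδ k (lt_of_le_of_lt hkr hrδ)
    -- main term bound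
    have hm1 : |(p * (starRingEnd ℂ) u).im| ≤ ‖p‖ := by
      calc |(p * (starRingEnd ℂ) u).im| ≤ ‖p * (starRingEnd ℂ) u‖ :=
            Complex.abs_im_le_norm _
      _ = ‖p‖ * ‖u‖ := by simp [Complex.norm_conj]
      _ = ‖p‖ := by rw [hun, mul_one]
    have hm2 : |(h * (starRingEnd ℂ) k).im| ≤ ‖h‖ * ‖k‖ := by
      calc |(h * (starRingEnd ℂ) k).im| ≤ ‖h * (starRingEnd ℂ) k‖ :=
            Complex.abs_im_le_norm _
      _ = ‖h‖ * ‖k‖ := by simp [Complex.norm_conj]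
    have hmain : |(-(2 * (p * (starRingEnd ℂ) u).im * (h * (starRingEnd ℂ) k).im))|
        ≤ 2 * ‖p‖ * (‖h‖ * ‖k‖) := by
      rw [abs_neg, abs_mul, abs_mul, abs_two]
      have := mul_le_mul hm1 hm2 (abs_nonneg _) (norm_nonneg p)
      nlinarith [abs_nonneg ((p * (starRingEnd ℂ) u).im)]
    set N := ((b (x + h) - b x) * (starRingEnd ℂ) (u * k)).re
              - ((b (x + k) - b x) * (starRingEnd ℂ) (u * h)).re with hN
    have hNb : |N| ≤ 2 * ‖p‖ * (‖h‖ * ‖k‖) + (ε * ‖h‖ * ‖k‖ + ε * ‖k‖ * ‖h‖) := by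
      have h1 : |N| ≤ |(-(2 * (p * (starRingEnd ℂ) u).im * (h * (starRingEnd ℂ) k).im))|
          + (‖E h‖ * ‖k‖ + ‖E k‖ * ‖h‖) := by
        have := abs_sub_abs_le_abs_sub N
          (-(2 * (p * (starRingEnd ℂ) u).im * (h * (starRingEnd ℂ) k).im))
        linarith [hdev]
      have h2 : ‖E h‖ * ‖k‖ ≤ ε * ‖h‖ * ‖k‖ :=
        mul_le_mul_of_nonneg_right hEhb (norm_nonneg k)
      have h3 : ‖E k‖ * ‖h‖ ≤ ε * ‖k‖ * ‖h‖ :=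
        mul_le_mul_of_nonneg_right hEkb (norm_nonneg h)
      linarith [hmain]
    rw [hveq]
    rw [div_le_iff₀ (by positivity)]
    calc |((b (x + h) - b x) * (starRingEnd ℂ) (Complex.exp ((θ:ℂ) * Complex.I) * k)).re
          - ((b (x + k) - b x) * (starRingEnd ℂ) (Complex.exp ((θ:ℂ) * Complex.I) * h)).re|
        = |N| := by rw [hN, hu]
    _ ≤ 2 * ‖p‖ * (‖h‖ * ‖k‖) + (ε * ‖h‖ * ‖k‖ + ε * ‖k‖ * ‖h‖) := hNb
    _ = (2 * ‖p‖ + 2 * ε) * (‖h‖ * ‖k‖) := by ring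
  -- lower element: T r contains an element ≥ 2‖p‖ - 2ε when r < δ
  have hlower : ∀ ε : ℝ, 0 < ε → ∀ δ : ℝ, 0 < δ →
      (∀ h : ℂ, ‖h‖ < δ → ‖E h‖ ≤ ε * ‖h‖) →
      ∀ r : ℝ, 0 < r → r < δ → ∃ v ∈ T r, 2 * ‖p‖ - 2 * ε ≤ v := by
    intro ε hε δ hδ hEδ r hr hrδ
    by_cases hp0 : p = 0
    · exact ⟨0, hzero r hr, by rw [hp0]; simp; linarith⟩
    · set u : ℂ := -Complex.I * p / (‖p‖ : ℂ) with hu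
      have hpn : (0:ℝ) < ‖p‖ := norm_pos_iff.mpr hp0
      have hun : ‖u‖ = 1 := by
        have h1 : ‖-Complex.I * p‖ = ‖p‖ := by
          rw [norm_mul]; simp
        have h2 : ‖((‖p‖:ℝ):ℂ)‖ = ‖p‖ := by
          rw [Complex.norm_real, Real.norm_eq_abs, abs_of_pos hpn]
        rw [hu, norm_div, h1, h2, div_self (ne_of_gt hpn)]
      obtain ⟨θ, hθmem, hθu⟩ := theta_exists u hun
      have hpu : (p * (starRingEnd ℂ) u).im = ‖p‖ := by
        rw [hu]
        have : (starRingEnd ℂ) (-Complex.I * p / (‖p‖:ℂ))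
            = Complex.I * (starRingEnd ℂ) p / (‖p‖:ℂ) := by
          rw [map_div₀, map_mul]
          simp
        rw [this]
        rw [show p * (Complex.I * (starRingEnd ℂ) p / (‖p‖:ℂ))
            = Complex.I * (p * (starRingEnd ℂ) p) / (‖p‖:ℂ) by ring]
        rw [Complex.mul_conj]
        have hsq : (Complex.normSq p : ℂ) = ((‖p‖^2 : ℝ) : ℂ) := by
          rw [Complex.normSq_eq_norm_sq]
        rw [hsq]
        rw [show Complex.I * ((‖p‖^2:ℝ):ℂ) / (‖p‖:ℂ) = Complex.I * (((‖p‖^2:ℝ):ℂ) / (‖p‖:ℂ)) by ring]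
        have : (((‖p‖^2:ℝ):ℂ) / ((‖p‖:ℝ):ℂ)) = ((‖p‖:ℝ):ℂ) := by
          rw [← Complex.ofReal_div]
          congr 1
          rw [sq, mul_div_assoc, div_self (ne_of_gt hpn), mul_one]
        rw [this]
        simp
      -- choose h = r, k = r*I
      set h : ℂ := (r : ℂ) with hh
      set k : ℂ := (r : ℂ) * Complex.I with hk
      have hh0 : h ≠ 0 := by rw [hh]; exact_mod_cast ne_of_gt hr
      have hk0 : k ≠ 0 := by
        rw [hk]; exact mul_ne_zero (by exact_mod_cast ne_of_gt hr) Complex.I_ne_zero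
      have hhn : ‖h‖ = r := by
        rw [hh]; simp [Complex.norm_real, abs_of_pos hr]
      have hkn : ‖k‖ = r := by
        rw [hk]; simp [Complex.norm_real, abs_of_pos hr]
      have hhk : (h * (starRingEnd ℂ) k).im = -(r^2) := by
        rw [hh, hk]
        simp [Complex.mul_im]
        ring
      set N := ((b (x + h) - b x) * (starRingEnd ℂ) (Complex.exp ((θ:ℂ) * Complex.I) * k)).re
              - ((b (x + k) - b x) * (starRingEnd ℂ) (Complex.exp ((θ:ℂ) * Complex.I) * h)).re with hN
      refine ⟨|N| / (‖h‖ * ‖k‖), ⟨h, k, θ, hh0, hk0, le_of_eq hhn, le_of_eq hkn, hθmem, rfl⟩, ?_⟩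
      -- main term value
      have hmainval : (-(2 * (p * (starRingEnd ℂ) u).im * (h * (starRingEnd ℂ) k).im))
          = 2 * ‖p‖ * r^2 := by rw [hpu, hhk]; ring
      have hdev := num_dev A u h k (E h) (E k)
      rw [← hEh h, ← hEh k] at hdev
      rw [show ‖u‖ = 1 by exact hun, one_mul, one_mul] at hdev
      have hEhb : ‖E h‖ ≤ ε * ‖h‖ := hEδ h (by rw [hhn]; exact hrδ)
      have hEkb : ‖E k‖ ≤ ε * ‖k‖ := hEδ k (by rw [hkn]; exact hrδ)
      have hNu : N = ((b (x + h) - b x) * (starRingEnd ℂ) (u * k)).re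
              - ((b (x + k) - b x) * (starRingEnd ℂ) (u * h)).re := by
        rw [hN, hθu]
      have hNlow : 2 * ‖p‖ * r^2 - 2 * ε * r^2 ≤ |N| := by
        have h1 : |N - (2 * ‖p‖ * r^2)| ≤ ‖E h‖ * ‖k‖ + ‖E k‖ * ‖h‖ := by
          rw [hNu, ← hmainval]; exact hdev
        have h2 : ‖E h‖ * ‖k‖ ≤ ε * r^2 := by
          rw [hkn]
          calc ‖E h‖ * r ≤ (ε * ‖h‖) * r := mul_le_mul_of_nonneg_right hEhb (le_of_lt hr)
          _ = ε * r^2 := by rw [hhn]; ring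
        have h3 : ‖E k‖ * ‖h‖ ≤ ε * r^2 := by
          rw [hhn]
          calc ‖E k‖ * r ≤ (ε * ‖k‖) * r := mul_le_mul_of_nonneg_right hEkb (le_of_lt hr)
          _ = ε * r^2 := by rw [hkn]; ring
        have h4 : |(2 * ‖p‖ * r^2)| - |N| ≤ |N - (2 * ‖p‖ * r^2)| := by
          have h4' := abs_sub_abs_le_abs_sub (2 * ‖p‖ * r^2) N
          rw [abs_sub_comm (2 * ‖p‖ * r^2) N] at h4'
          linarith
        have h5 : |(2 * ‖p‖ * r^2)| = 2 * ‖p‖ * r^2 := abs_of_nonneg (by positivity)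
        linarith
      rw [hhn, hkn]
      rw [le_div_iff₀ (by positivity)]
      calc (2 * ‖p‖ - 2 * ε) * (r * r) = 2 * ‖p‖ * r^2 - 2 * ε * r^2 := by ring
      _ ≤ |N| := hNlow
  -- now the tendsto statement
  have htend : Tendsto (fun r : ℝ => sSup (T r)) (nhdsWithin 0 (Set.Ioi 0))
      (nhds (2 * ‖p‖)) := by
    rw [Metric.tendsto_nhdsWithin_nhds]
    intro ε hε
    obtain ⟨δ, hδ, hEδ⟩ := hEsmall (ε/4) (by positivity)
    refine ⟨δ, hδ, ?_⟩
    intro r hrmem hrd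
    have hr : 0 < r := hrmem
    have hrδ : r < δ := by
      rw [Real.dist_eq, sub_zero, abs_of_pos hr] at hrd; exact hrd
    have hbdd : BddAbove (T r) :=
      ⟨2 * ‖p‖ + 2 * (ε/4), fun v hv => hupper (ε/4) (by positivity) δ hδ hEδ r hr hrδ v hv⟩
    have hne : (T r).Nonempty := ⟨0, hzero r hr⟩
    have hub : sSup (T r) ≤ 2 * ‖p‖ + 2 * (ε/4) :=
      csSup_le hne (hupper (ε/4) (by positivity) δ hδ hEδ r hr hrδ)
    obtain ⟨v, hvmem, hvlb⟩ := hlower (ε/4) (by positivity) δ hδ hEδ r hr hrδ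
    have hlb : 2 * ‖p‖ - 2 * (ε/4) ≤ sSup (T r) := le_trans hvlb (le_csSup hbdd hvmem)
    rw [Real.dist_eq, abs_sub_lt_iff]
    constructor <;> linarith
  exact htend.limsup_eq
end

section
/- Let b : ℝ^n → ℝ^n be differentiable at a point x. Then limsup as |h|,|k| → 0 of |⟨b(x+h)−b(x), k⟩ − ⟨b(x+k)−b(x), h⟩| / (|h||k|) equals |Db(x) − Dᵗb(x)|, the operator norm of the antisymmetric part of the differential (times 2, i.e. of the matrix Db(x) − Dᵗb(x)). -/
open Filter
open scoped RealInnerProductSpace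

set_option maxHeartbeats 1000000
/-- If `b : ℝⁿ → ℝⁿ` is differentiable at `x`, then the limsup as `|h|,|k| → 0` of
`|⟨b(x+h)−b(x), k⟩ − ⟨b(x+k)−b(x), h⟩|/(|h||k|)` equals the operator norm of
`Db(x) − Dᵗb(x)` (the adjoint being the transpose). -/
theorem antisymmetric_part_pointwise_limsup (n : ℕ)
    (b : EuclideanSpace ℝ (Fin n) → EuclideanSpace ℝ (Fin n))
    (x : EuclideanSpace ℝ (Fin n)) (hb : DifferentiableAt ℝ b x) :
    Filter.limsup
      (fun r : ℝ => sSup {v : ℝ | ∃ h k : EuclideanSpace ℝ (Fin n),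
        h ≠ 0 ∧ k ≠ 0 ∧ ‖h‖ ≤ r ∧ ‖k‖ ≤ r ∧
        v = |⟪b (x + h) - b x, k⟫ - ⟪b (x + k) - b x, h⟫| / (‖h‖ * ‖k‖)})
      (nhdsWithin 0 (Set.Ioi 0))
    = ‖fderiv ℝ b x - ContinuousLinearMap.adjoint (fderiv ℝ b x)‖ := by
  set A := fderiv ℝ b x with hA
  set M := A - ContinuousLinearMap.adjoint A with hMdef
  set e := fun h : EuclideanSpace ℝ (Fin n) => b (x + h) - b x - A h with he
  -- key algebraic identity
  have key : ∀ h k : EuclideanSpace ℝ (Fin n),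
      ⟪b (x + h) - b x, k⟫ - ⟪b (x + k) - b x, h⟫
        = ⟪M h, k⟫ + (⟪e h, k⟫ - ⟪e k, h⟫) := by
    intro h k
    have h1 : ⟪(ContinuousLinearMap.adjoint A) h, k⟫ = ⟪A k, h⟫ := by
      rw [ContinuousLinearMap.adjoint_inner_left, real_inner_comm]
    have hbh : b (x + h) - b x = A h + e h := by simp [he]
    have hbk : b (x + k) - b x = A k + e k := by simp [he]
    rw [hbh, hbk, hMdef]
    simp only [ContinuousLinearMap.sub_apply, inner_sub_left, inner_add_left, h1]
    ring
  -- little-o estimate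
  have littleo : ∀ ε : ℝ, 0 < ε → ∃ δ > (0:ℝ),
      ∀ h : EuclideanSpace ℝ (Fin n), ‖h‖ ≤ δ → ‖e h‖ ≤ ε * ‖h‖ := by
    intro ε hε
    have hO := (hb.hasFDerivAt.isLittleO).def hε
    rw [Metric.eventually_nhds_iff] at hO
    obtain ⟨δ, hδ, hδ'⟩ := hO
    refine ⟨δ / 2, by positivity, fun h hh => ?_⟩
    have hd : dist (x + h) x < δ := by
      rw [dist_eq_norm, add_sub_cancel_left]
      linarith
    have := hδ' hd
    simpa [he, add_sub_cancel_left] using this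
  -- main tendsto statement
  have main : Tendsto
      (fun r : ℝ => sSup {v : ℝ | ∃ h k : EuclideanSpace ℝ (Fin n),
        h ≠ 0 ∧ k ≠ 0 ∧ ‖h‖ ≤ r ∧ ‖k‖ ≤ r ∧
        v = |⟪b (x + h) - b x, k⟫ - ⟪b (x + k) - b x, h⟫| / (‖h‖ * ‖k‖)})
      (nhdsWithin 0 (Set.Ioi 0)) (nhds ‖M‖) := by
    rw [Metric.tendsto_nhds]
    intro ε hε
    obtain ⟨δ, hδ, hδ'⟩ := littleo (ε / 4) (by positivity)
    filter_upwards [Ioc_mem_nhdsGT_of_mem (Set.mem_Ico.2 ⟨le_refl 0, hδ⟩)] with r hr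
    obtain ⟨hr0, hrδ⟩ := hr
    set s := {v : ℝ | ∃ h k : EuclideanSpace ℝ (Fin n),
        h ≠ 0 ∧ k ≠ 0 ∧ ‖h‖ ≤ r ∧ ‖k‖ ≤ r ∧
        v = |⟪b (x + h) - b x, k⟫ - ⟪b (x + k) - b x, h⟫| / (‖h‖ * ‖k‖)} with hs
    -- upper bound for all elements of s
    have hub : ∀ v ∈ s, v ≤ ‖M‖ + ε / 2 := by
      rintro v ⟨h, k, hh0, hk0, hhr, hkr, rfl⟩
      have hhn : 0 < ‖h‖ := norm_pos_iff.2 hh0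
      have hkn : 0 < ‖k‖ := norm_pos_iff.2 hk0
      rw [div_le_iff₀ (by positivity)]
      rw [key h k]
      have b1 : |⟪M h, k⟫| ≤ ‖M‖ * ‖h‖ * ‖k‖ := by
        calc |⟪M h, k⟫| ≤ ‖M h‖ * ‖k‖ := abs_real_inner_le_norm _ _
          _ ≤ ‖M‖ * ‖h‖ * ‖k‖ := by
              have := M.le_opNorm h
              nlinarith [norm_nonneg k]
      have beh : ‖e h‖ ≤ (ε / 4) * ‖h‖ := hδ' h (hhr.trans hrδ)
      have bek : ‖e k‖ ≤ (ε / 4) * ‖k‖ := hδ' k (hkr.trans hrδ)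
      have b2 : |⟪e h, k⟫| ≤ (ε / 4) * ‖h‖ * ‖k‖ := by
        calc |⟪e h, k⟫| ≤ ‖e h‖ * ‖k‖ := abs_real_inner_le_norm _ _
          _ ≤ (ε / 4) * ‖h‖ * ‖k‖ := by nlinarith [norm_nonneg k]
      have b3 : |⟪e k, h⟫| ≤ (ε / 4) * ‖k‖ * ‖h‖ := by
        calc |⟪e k, h⟫| ≤ ‖e k‖ * ‖h‖ := abs_real_inner_le_norm _ _
          _ ≤ (ε / 4) * ‖k‖ * ‖h‖ := by nlinarith [norm_nonneg h]
      calc |⟪M h, k⟫ + (⟪e h, k⟫ - ⟪e k, h⟫)|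
          ≤ |⟪M h, k⟫| + |⟪e h, k⟫| + |⟪e k, h⟫| := by
            have := abs_add_le (⟪M h, k⟫) (⟪e h, k⟫ - ⟪e k, h⟫)
            have := abs_sub (⟪e h, k⟫) (⟪e k, h⟫)
            linarith
        _ ≤ ‖M‖ * ‖h‖ * ‖k‖ + (ε / 4) * ‖h‖ * ‖k‖ + (ε / 4) * ‖k‖ * ‖h‖ := by
            linarith
        _ ≤ (‖M‖ + ε / 2) * (‖h‖ * ‖k‖) := by nlinarith
    have hbdd : BddAbove s := ⟨‖M‖ + ε / 2, fun v hv => hub v hv⟩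
    have hsup_le : sSup s ≤ ‖M‖ + ε / 2 :=
      Real.sSup_le hub (by positivity)
    have hsup_nonneg : 0 ≤ sSup s := by
      apply Real.sSup_nonneg
      rintro v ⟨h, k, hh0, hk0, _, _, rfl⟩
      positivity
    -- lower bound
    have hlow : ‖M‖ - 3 * (ε / 4) ≤ sSup s := by
      by_cases hMε : ‖M‖ ≤ ε / 4
      · linarith
      · push_neg at hMε
        have hc : (0:ℝ) ≤ ‖M‖ - ε / 4 := by linarith
        have : ¬ ‖M‖ ≤ ‖M‖ - ε / 4 := by linarith
        rw [ContinuousLinearMap.opNorm_le_iff hc] at this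
        push_neg at this
        obtain ⟨u, hu⟩ := this
        have hu0 : u ≠ 0 := by
          intro h0
          rw [h0] at hu
          simp only [map_zero, norm_zero, mul_zero] at hu
          exact lt_irrefl 0 hu
        have hun : 0 < ‖u‖ := norm_pos_iff.2 hu0
        have hMu : 0 < ‖M u‖ := lt_of_le_of_lt (by positivity) hu
        have hMu0 : M u ≠ 0 := norm_pos_iff.1 hMu
        set h := (r / ‖u‖) • u with hh
        set k := (r / ‖M u‖) • (M u) with hk
        have hhne : h ≠ 0 := smul_ne_zero (by positivity) hu0
        have hkne : k ≠ 0 := smul_ne_zero (by positivity) hMu0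
        have hhn : ‖h‖ = r := by
          rw [hh, norm_smul, Real.norm_eq_abs, abs_of_pos (by positivity)]
          field_simp
        have hkn : ‖k‖ = r := by
          rw [hk, norm_smul, Real.norm_eq_abs, abs_of_pos (by positivity)]
          field_simp
        set v := |⟪b (x + h) - b x, k⟫ - ⟪b (x + k) - b x, h⟫| / (‖h‖ * ‖k‖) with hv
        have hvs : v ∈ s := ⟨h, k, hhne, hkne, le_of_eq hhn, le_of_eq hkn, rfl⟩
        have hvge : ‖M‖ - 3 * (ε / 4) ≤ v := by
          have hMhk : ⟪M h, k⟫ = r ^ 2 * (‖M u‖ / ‖u‖) := by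
            rw [hh, hk, map_smul, real_inner_smul_left, real_inner_smul_right,
              real_inner_self_eq_norm_sq]
            field_simp
          have hMhk_ge : r ^ 2 * (‖M‖ - ε / 4) ≤ ⟪M h, k⟫ := by
            rw [hMhk]
            have : ‖M‖ - ε / 4 ≤ ‖M u‖ / ‖u‖ := by
              rw [le_div_iff₀ hun]; linarith
            nlinarith [sq_nonneg r]
          have beh : ‖e h‖ ≤ (ε / 4) * ‖h‖ := hδ' h (hhn.le.trans hrδ)
          have bek : ‖e k‖ ≤ (ε / 4) * ‖k‖ := hδ' k (hkn.le.trans hrδ)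
          have b2 : |⟪e h, k⟫| ≤ (ε / 4) * r ^ 2 := by
            calc |⟪e h, k⟫| ≤ ‖e h‖ * ‖k‖ := abs_real_inner_le_norm _ _
              _ ≤ (ε / 4) * r ^ 2 := by
                  rw [hkn, hhn] at *
                  nlinarith
          have b3 : |⟪e k, h⟫| ≤ (ε / 4) * r ^ 2 := by
            calc |⟪e k, h⟫| ≤ ‖e k‖ * ‖h‖ := abs_real_inner_le_norm _ _
              _ ≤ (ε / 4) * r ^ 2 := by
                  rw [hhn, hkn] at *
                  nlinarith
          have hnum : r ^ 2 * (‖M‖ - 3 * (ε / 4))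
              ≤ |⟪b (x + h) - b x, k⟫ - ⟪b (x + k) - b x, h⟫| := by
            rw [key h k]
            have habs : ⟪M h, k⟫ + (⟪e h, k⟫ - ⟪e k, h⟫)
                ≤ |⟪M h, k⟫ + (⟪e h, k⟫ - ⟪e k, h⟫)| := le_abs_self _
            have h1 : -((ε/4) * r^2) ≤ ⟪e h, k⟫ := neg_le_of_abs_le b2 |>.trans_eq rfl
            have h2 : ⟪e k, h⟫ ≤ (ε/4) * r^2 := le_of_abs_le b3
            nlinarith
          rw [hv, hhn, hkn, le_div_iff₀ (by positivity)]
          calc (‖M‖ - 3 * (ε / 4)) * (r * r) = r ^ 2 * (‖M‖ - 3 * (ε / 4)) := by ring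
            _ ≤ _ := hnum
        exact hvge.trans (le_csSup hbdd hvs)
    rw [Real.dist_eq, abs_sub_lt_iff]
    exact ⟨by linarith, by linarith⟩
  exact main.limsup_eq
end

section
/- Let b : ℝ^n → ℝ^n be continuous and belong to the class R₀, meaning |⟨b(x+h)−b(x), k⟩ − ⟨b(x+k)−b(x), h⟩| ≤ C₀ |h||k| for all x ∈ ℝ^n and all h, k with |h| = |k| ≠ 0. Then b belongs to the Zygmund class, with ‖b‖_Z ≤ 4 C₀, i.e. |b(z+v) + b(z−v) − 2b(z)| ≤ 4 C₀ |v| for all z, v ∈ ℝ^n. -/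
open scoped RealInnerProductSpace

private lemma R0_stepA {n : ℕ}
    (b : EuclideanSpace ℝ (Fin n) → EuclideanSpace ℝ (Fin n)) (C₀ : ℝ)
    (hR : ∀ (x h k : EuclideanSpace ℝ (Fin n)), ‖h‖ = ‖k‖ → h ≠ 0 →
      |⟪b (x + h) - b x, k⟫ - ⟪b (x + k) - b x, h⟫| ≤ C₀ * ‖h‖ * ‖k‖)
    (z v : EuclideanSpace ℝ (Fin n)) (hv : v ≠ 0) :
    |⟪b (z + v) + b (z - v) - (2 : ℝ) • b z, v⟫| ≤ C₀ * ‖v‖ * ‖v‖ := by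
  have h := hR z v (-v) (by simp) hv
  have e : z + -v = z - v := by abel
  rw [e] at h
  have key : ⟪b (z + v) - b z, -v⟫ - ⟪b (z - v) - b z, v⟫
      = -⟪b (z + v) + b (z - v) - (2 : ℝ) • b z, v⟫ := by
    simp only [inner_sub_left, inner_add_left, inner_neg_right, real_inner_smul_left]
    ring
  rw [key, abs_neg] at h
  simpa using h

private lemma R0_stepB {n : ℕ}
    (b : EuclideanSpace ℝ (Fin n) → EuclideanSpace ℝ (Fin n)) (C₀ : ℝ)
    (hR : ∀ (x h k : EuclideanSpace ℝ (Fin n)), ‖h‖ = ‖k‖ → h ≠ 0 →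
      |⟪b (x + h) - b x, k⟫ - ⟪b (x + k) - b x, h⟫| ≤ C₀ * ‖h‖ * ‖k‖)
    (z v a : EuclideanSpace ℝ (Fin n)) (hv : v ≠ 0)
    (ha : ‖a‖ = ‖v‖) (hav : ⟪a, v⟫ = 0) :
    |⟪(b (z + v) + b (z - v)) - (b (z + a) + b (z - a)), a⟫|
      ≤ 2 * C₀ * (‖v‖ * ‖v‖) := by
  have ht : 0 < ‖v‖ := norm_pos_iff.mpr hv
  have hsq1 : ‖a - v‖ ^ 2 = 2 * (‖v‖ * ‖v‖) := by
    rw [norm_sub_sq_real, hav, ha]; ring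
  have hsq2 : ‖a + v‖ ^ 2 = 2 * (‖v‖ * ‖v‖) := by
    rw [norm_add_sq_real, hav, ha]; ring
  have en1 : (-a - v : EuclideanSpace ℝ (Fin n)) = -(a + v) := by abel
  have en2 : (-a + v : EuclideanSpace ℝ (Fin n)) = -(a - v) := by abel
  have hnorm1 : ‖a - v‖ = ‖-a - v‖ := by
    rw [en1, norm_neg]
    have := congrArg Real.sqrt (hsq1.trans hsq2.symm)
    simpa [Real.sqrt_sq (norm_nonneg (a - v)), Real.sqrt_sq (norm_nonneg (a + v))]
      using this
  have hnorm2 : ‖a + v‖ = ‖-a + v‖ := by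
    rw [en2, norm_neg]
    have := congrArg Real.sqrt (hsq2.trans hsq1.symm)
    simpa [Real.sqrt_sq (norm_nonneg (a - v)), Real.sqrt_sq (norm_nonneg (a + v))]
      using this
  have hne1 : a - v ≠ 0 := by
    intro h0
    rw [h0] at hsq1
    simp at hsq1
    exact hv hsq1
  have hne2 : a + v ≠ 0 := by
    intro h0
    rw [h0] at hsq2
    simp at hsq2
    exact hv hsq2
  have h1 := hR (z + v) (a - v) (-a - v) hnorm1 hne1
  have h2 := hR (z - v) (a + v) (-a + v) hnorm2 hne2
  have e11 : z + v + (a - v) = z + a := by abel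
  have e12 : z + v + (-a - v) = z - a := by abel
  have e21 : z - v + (a + v) = z + a := by abel
  have e22 : z - v + (-a + v) = z - a := by abel
  rw [e11, e12, ← hnorm1] at h1
  rw [e21, e22, ← hnorm2] at h2
  have hr1 : C₀ * ‖a - v‖ * ‖a - v‖ = 2 * C₀ * (‖v‖ * ‖v‖) := by
    linear_combination C₀ * hsq1
  have hr2 : C₀ * ‖a + v‖ * ‖a + v‖ = 2 * C₀ * (‖v‖ * ‖v‖) := by
    linear_combination C₀ * hsq2
  rw [hr1] at h1
  rw [hr2] at h2
  set E1 := ⟪b (z + a) - b (z + v), -a - v⟫ - ⟪b (z - a) - b (z + v), a - v⟫ with hE1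
  set E2 := ⟪b (z + a) - b (z - v), -a + v⟫ - ⟪b (z - a) - b (z - v), a + v⟫ with hE2
  set X := ⟪(b (z + v) + b (z - v)) - (b (z + a) + b (z - a)), a⟫ with hX
  have key : E1 + E2 = 2 * X := by
    rw [hE1, hE2, hX]
    simp only [inner_sub_left, inner_add_left, inner_sub_right, inner_add_right,
      inner_neg_right]
    ring
  have habs : |2 * X| ≤ 4 * C₀ * (‖v‖ * ‖v‖) := by
    rw [← key]
    calc |E1 + E2| ≤ |E1| + |E2| := abs_add_le _ _
      _ ≤ 2 * C₀ * (‖v‖ * ‖v‖) + 2 * C₀ * (‖v‖ * ‖v‖) := add_le_add h1 h2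
      _ = 4 * C₀ * (‖v‖ * ‖v‖) := by ring
  rw [abs_mul, abs_two] at habs
  linarith

/-- If `b : ℝⁿ → ℝⁿ` is continuous and belongs to the class `R₀` with constant `C₀`,
then `b` is in the Zygmund class with `‖b‖_Z ≤ 4 C₀`. -/
theorem R0_subset_Zygmund (n : ℕ)
    (b : EuclideanSpace ℝ (Fin n) → EuclideanSpace ℝ (Fin n))
    (hb : Continuous b) (C₀ : ℝ)
    (hR : ∀ (x h k : EuclideanSpace ℝ (Fin n)), ‖h‖ = ‖k‖ → h ≠ 0 →
      |⟪b (x + h) - b x, k⟫ - ⟪b (x + k) - b x, h⟫| ≤ C₀ * ‖h‖ * ‖k‖) :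
    ∀ z v : EuclideanSpace ℝ (Fin n),
      ‖b (z + v) + b (z - v) - (2 : ℝ) • b z‖ ≤ 4 * C₀ * ‖v‖ := by
  intro z v
  by_cases hv : v = 0
  · subst hv
    simp [two_smul]
  have ht : 0 < ‖v‖ := norm_pos_iff.mpr hv
  -- C₀ is nonnegative
  have hC : 0 ≤ C₀ := by
    have h00 := hR z v v rfl hv
    simp only [sub_self, abs_zero] at h00
    nlinarith [mul_pos ht ht]
  set D := b (z + v) + b (z - v) - (2 : ℝ) • b z with hD
  set c := ⟪D, v⟫ with hc
  set P := (c / (‖v‖ * ‖v‖)) • v with hP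
  set Q := D - P with hQdef
  have hPQ : D = P + Q := by rw [hQdef]; abel
  have hvv : ⟪v, v⟫ = ‖v‖ * ‖v‖ := real_inner_self_eq_norm_mul_norm v
  have hQv : ⟪Q, v⟫ = 0 := by
    rw [hQdef, inner_sub_left, hP, real_inner_smul_left, hvv,
      div_mul_cancel₀ _ (by positivity : (‖v‖ * ‖v‖) ≠ 0), ← hc, sub_self]
  have hA := R0_stepA b C₀ hR z v hv
  rw [← hD, ← hc] at hA
  have hPnorm : ‖P‖ ≤ C₀ * ‖v‖ := by
    have h1 : ‖P‖ = |c| / ‖v‖ := by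
      rw [hP, norm_smul, Real.norm_eq_abs, abs_div, abs_of_pos (mul_pos ht ht)]
      field_simp
    rw [h1, div_le_iff₀ ht]
    nlinarith
  by_cases hQ : Q = 0
  · have hDP : D = P := by rw [hPQ, hQ, add_zero]
    rw [hDP]
    nlinarith [ht.le]
  have hQn : 0 < ‖Q‖ := norm_pos_iff.mpr hQ
  set a := (‖v‖ / ‖Q‖) • Q with haDef
  have hanorm : ‖a‖ = ‖v‖ := by
    rw [haDef, norm_smul, Real.norm_eq_abs, abs_of_pos (div_pos ht hQn)]
    field_simp
  have hane : a ≠ 0 := by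
    intro h0
    rw [h0, norm_zero] at hanorm
    exact ht.ne hanorm
  have hav : ⟪a, v⟫ = 0 := by
    rw [haDef, real_inner_smul_left, hQv, mul_zero]
  have hB := R0_stepB b C₀ hR z v a hv hanorm hav
  have hA2 := R0_stepA b C₀ hR z a hane
  rw [hanorm] at hA2
  have hvQ : ⟪v, Q⟫ = 0 := by rw [real_inner_comm]; exact hQv
  have hDQ : ⟪D, Q⟫ = ‖Q‖ * ‖Q‖ := by
    rw [hPQ, inner_add_left, hP, real_inner_smul_left, hvQ,
      real_inner_self_eq_norm_mul_norm]
    ring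
  have hDa : ⟪D, a⟫ = ‖v‖ * ‖Q‖ := by
    rw [haDef, real_inner_smul_right, hDQ]
    field_simp
  have hid : ⟪D, a⟫ = ⟪(b (z + v) + b (z - v)) - (b (z + a) + b (z - a)), a⟫
      + ⟪b (z + a) + b (z - a) - (2 : ℝ) • b z, a⟫ := by
    rw [← inner_add_left, hD]
    congr 1
    module
  have hQnorm : ‖Q‖ ≤ 3 * C₀ * ‖v‖ := by
    have h3 : ‖v‖ * ‖Q‖ ≤ 3 * C₀ * (‖v‖ * ‖v‖) := by
      rw [← hDa, hid]
      calc ⟪(b (z + v) + b (z - v)) - (b (z + a) + b (z - a)), a⟫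
            + ⟪b (z + a) + b (z - a) - (2 : ℝ) • b z, a⟫
          ≤ |⟪(b (z + v) + b (z - v)) - (b (z + a) + b (z - a)), a⟫|
            + |⟪b (z + a) + b (z - a) - (2 : ℝ) • b z, a⟫| := by
            exact add_le_add (le_abs_self _) (le_abs_self _)
        _ ≤ 2 * C₀ * (‖v‖ * ‖v‖) + C₀ * ‖v‖ * ‖v‖ := add_le_add hB hA2
        _ = 3 * C₀ * (‖v‖ * ‖v‖) := by ring
    nlinarith
  calc ‖D‖ = ‖P + Q‖ := by rw [hPQ]
    _ ≤ ‖P‖ + ‖Q‖ := norm_add_le _ _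
    _ ≤ C₀ * ‖v‖ + 3 * C₀ * ‖v‖ := add_le_add hPnorm hQnorm
    _ = 4 * C₀ * ‖v‖ := by ring
end

section
/- Let b : ℝ^n → ℝ^n be in the class R₀. Then for all x ∈ ℝ^n and all nonzero h, k ∈ ℝ^n (not necessarily of equal length), |⟨b(x+h)−b(x), k⟩ − ⟨b(x+k)−b(x), h⟩| / (|h||k|) ≤ C(n) ‖b‖_{R₀} (1 + |log(|h|/|k|)|) for a constant C(n) depending only on n. -/
set_option maxHeartbeats 1000000

open scoped RealInnerProductSpace

section Aux

variable {E : Type*} [NormedAddCommGroup E] [InnerProductSpace ℝ E]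

/-- Zygmund estimate for vector fields in `R₀`: mixed second difference paired
with any vector of equal norm. -/
lemma zyg_aux (b : E → E) (C₀ : ℝ)
    (hb : ∀ (x h k : E), ‖h‖ = ‖k‖ → h ≠ 0 →
      |⟪b (x + h) - b x, k⟫ - ⟪b (x + k) - b x, h⟫| ≤ C₀ * ‖h‖ * ‖k‖)
    (y a c : E) (hac : ‖a‖ = ‖c‖) (ha : a ≠ 0) :
    |⟪b (y + a) - b y, c⟫ + ⟪b (y - a) - b y, c⟫| ≤ 2 * C₀ * (‖a‖ * ‖c‖) := by
  have hc : c ≠ 0 := by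
    intro h0
    apply ha
    rw [← norm_eq_zero]
    rw [hac, h0, norm_zero]
  have h1 := hb y (-c) a (by rw [norm_neg, hac]) (neg_ne_zero.2 hc)
  have h2 := hb y (-a) (-c) (by rw [norm_neg, norm_neg, hac]) (neg_ne_zero.2 ha)
  simp only [norm_neg] at h1 h2
  have key : (⟪b (y + -c) - b y, a⟫ - ⟪b (y + a) - b y, -c⟫)
      - (⟪b (y + -a) - b y, -c⟫ - ⟪b (y + -c) - b y, -a⟫)
      = ⟪b (y + a) - b y, c⟫ + ⟪b (y - a) - b y, c⟫ := by
    rw [sub_eq_add_neg y a]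
    simp only [inner_neg_right]
    ring
  calc |⟪b (y + a) - b y, c⟫ + ⟪b (y - a) - b y, c⟫|
      = |(⟪b (y + -c) - b y, a⟫ - ⟪b (y + a) - b y, -c⟫)
          - (⟪b (y + -a) - b y, -c⟫ - ⟪b (y + -c) - b y, -a⟫)| := by rw [key]
    _ ≤ |⟪b (y + -c) - b y, a⟫ - ⟪b (y + a) - b y, -c⟫|
          + |⟪b (y + -a) - b y, -c⟫ - ⟪b (y + -c) - b y, -a⟫| := abs_sub _ _
    _ ≤ C₀ * ‖c‖ * ‖a‖ + C₀ * ‖a‖ * ‖c‖ := add_le_add h1 h2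
    _ = 2 * C₀ * (‖a‖ * ‖c‖) := by ring

end Aux

/-- One-dimensional Zygmund bound on an interval, via dyadic bisection. -/
lemma dyadic_aux (g : ℝ → ℝ) (hg : Continuous g) (g0 : g 0 = 0) {Z : ℝ} (hZ0 : 0 ≤ Z)
    (hZ : ∀ p τ : ℝ, 0 < τ → |g (p + τ) + g (p - τ) - 2 * g p| ≤ Z * τ)
    {s : ℝ} (hs : 0 < s) {μ : ℝ} (hμ0 : 0 ≤ μ) (hμ1 : μ ≤ 1) :
    |g (μ * s) - μ * g s| ≤ Z * s := by
  set d : ℝ → ℝ := fun μ => g (μ * s) - μ * g s with hd_def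
  have hd : Continuous d := by
    apply Continuous.sub
    · exact hg.comp (continuous_id.mul continuous_const)
    · exact continuous_id.mul continuous_const
  clear_value d
  have hZs : 0 ≤ Z * s := mul_nonneg hZ0 hs.le
  have claim : ∀ m k : ℕ, k ≤ 2 ^ m → |d ((k : ℝ) / 2 ^ m)| ≤ Z * s * (1 - 1 / 2 ^ m) := by
    intro m
    induction m with
    | zero =>
      intro k hk
      interval_cases k
      · simp [hd_def, g0]
      · simp [hd_def]
    | succ m ih =>
      intro k hk
      have hp2 : (0:ℝ) < 2 ^ m := by positivity
      have hpow : (2:ℕ) ^ (m + 1) = 2 ^ m * 2 := pow_succ 2 m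
      rcases Nat.even_or_odd k with ⟨j, hj⟩ | ⟨j, hj⟩
      · -- even case
        have hjle : j ≤ 2 ^ m := by omega
        have harg : (k : ℝ) / 2 ^ (m + 1) = (j : ℝ) / 2 ^ m := by
          subst hj; push_cast; rw [pow_succ]; field_simp; ring
        rw [harg]
        refine (ih j hjle).trans ?_
        have h1 : (1:ℝ) / 2 ^ (m + 1) ≤ 1 / 2 ^ m := by
          apply one_div_le_one_div_of_le hp2
          rw [pow_succ]; nlinarith
        nlinarith [mul_nonneg hZs (sub_nonneg.2 h1)]
      · -- odd case
        have hjle : j + 1 ≤ 2 ^ m := by omega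
        set A : ℝ := ((j : ℝ) + 1) / 2 ^ m with hA_def
        set B : ℝ := (j : ℝ) / 2 ^ m with hB_def
        set μ' : ℝ := (k : ℝ) / 2 ^ (m + 1) with hμ'_def
        have ihA := ih (j + 1) hjle
        have ihB := ih j (by omega)
        have hcastA : ((j + 1 : ℕ) : ℝ) / 2 ^ m = A := by push_cast [hA_def]; ring
        rw [hcastA] at ihA
        have hτpos : (0:ℝ) < s / 2 ^ (m + 1) := by positivity
        have h2 := hZ (μ' * s) (s / 2 ^ (m + 1)) hτpos
        have eA : μ' * s + s / 2 ^ (m + 1) = A * s := by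
          rw [hμ'_def, hA_def, hj]; push_cast; rw [pow_succ]; field_simp; ring
        have eB : μ' * s - s / 2 ^ (m + 1) = B * s := by
          rw [hμ'_def, hB_def, hj]; push_cast; rw [pow_succ]; field_simp; ring
        rw [eA, eB] at h2
        have hco : A + B - 2 * μ' = 0 := by
          rw [hμ'_def, hA_def, hB_def, hj]; push_cast; rw [pow_succ]; field_simp; ring
        have hE : d A + d B - 2 * d μ' = g (A * s) + g (B * s) - 2 * g (μ' * s) := by
          simp only [hd_def]
          linear_combination (-(g s)) * hco
        have hhalf : (1:ℝ) / 2 ^ (m + 1) = (1 / 2 ^ m) / 2 := by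
          rw [pow_succ]; ring
        have hτval : s / 2 ^ (m + 1) = s * (1 / 2 ^ m) / 2 := by
          rw [pow_succ]; ring
        rw [hτval] at h2
        rw [hhalf]
        have h2' := abs_le.1 h2
        rw [← hB_def] at ihB
        have ihA' := abs_le.1 ihA
        have ihB' := abs_le.1 ihB
        have hprod : 0 ≤ Z * s * (1 / 2 ^ m) :=
          mul_nonneg hZs (le_of_lt (one_div_pos.2 hp2))
        rw [abs_le]
        constructor <;> linarith [hprod, h2'.1, h2'.2, ihA'.1, ihA'.2, ihB'.1, ihB'.2]
  -- pass to the limit over dyadic approximations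
  set u : ℕ → ℝ := fun m => ((⌊μ * 2 ^ m⌋₊ : ℝ) / 2 ^ m) with hu_def
  have hfloor_le : ∀ m : ℕ, ⌊μ * 2 ^ m⌋₊ ≤ 2 ^ m := by
    intro m
    have h1 : μ * 2 ^ m ≤ ((2 ^ m : ℕ) : ℝ) := by push_cast; nlinarith [pow_pos (by norm_num : (0:ℝ) < 2) m]
    calc ⌊μ * 2 ^ m⌋₊ ≤ ⌊((2 ^ m : ℕ) : ℝ)⌋₊ := Nat.floor_mono h1
      _ = 2 ^ m := Nat.floor_natCast _
  have hub : ∀ m : ℕ, |d (u m)| ≤ Z * s := by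
    intro m
    refine (claim m _ (hfloor_le m)).trans ?_
    have : (0:ℝ) < 2 ^ m := by positivity
    linarith [mul_nonneg hZs (le_of_lt (one_div_pos.2 this))]
  have hul : ∀ m : ℕ, μ - (1/2 : ℝ) ^ m ≤ u m := by
    intro m
    have hp : (0:ℝ) < 2 ^ m := by positivity
    have h1 : μ * 2 ^ m < (⌊μ * 2 ^ m⌋₊ : ℝ) + 1 := Nat.lt_floor_add_one _
    have h2 : ((1:ℝ)/2) ^ m = 1 / 2 ^ m := by rw [div_pow, one_pow]
    have hinv : (1 / 2 ^ m : ℝ) * 2 ^ m = 1 := by field_simp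
    rw [hu_def, h2, le_div_iff₀ hp]
    linarith
  have huu : ∀ m : ℕ, u m ≤ μ := by
    intro m
    have hp : (0:ℝ) < 2 ^ m := by positivity
    have h1 : (⌊μ * 2 ^ m⌋₊ : ℝ) ≤ μ * 2 ^ m := Nat.floor_le (by positivity)
    rw [hu_def]
    rw [div_le_iff₀ hp]
    linarith
  have htend : Filter.Tendsto u Filter.atTop (nhds μ) := by
    have hlow : Filter.Tendsto (fun m : ℕ => μ - (1/2 : ℝ) ^ m) Filter.atTop (nhds μ) := by
      have := tendsto_pow_atTop_nhds_zero_of_lt_one (by norm_num : (0:ℝ) ≤ 1/2) (by norm_num : (1:ℝ)/2 < 1)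
      have h2 := Filter.Tendsto.sub (tendsto_const_nhds (x := μ)) this
      simpa using h2
    exact tendsto_of_tendsto_of_tendsto_of_le_of_le hlow tendsto_const_nhds hul huu
  have hcomp : Filter.Tendsto (fun m => |d (u m)|) Filter.atTop (nhds (|d μ|)) :=
    ((continuous_abs.comp hd).tendsto μ).comp htend
  have hfin := le_of_tendsto hcomp (Filter.Eventually.of_forall hub)
  rw [hd_def] at hfin
  simpa using hfin

/-- Logarithmic ratio estimate for Zygmund functions. -/
lemma ratio_aux (g : ℝ → ℝ) (hg : Continuous g) (g0 : g 0 = 0) {Z : ℝ} (hZ0 : 0 ≤ Z)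
    (hZ : ∀ p τ : ℝ, 0 < τ → |g (p + τ) + g (p - τ) - 2 * g p| ≤ Z * τ) :
    ∀ N : ℕ, ∀ r s : ℝ, 0 < r → r ≤ s → s ≤ r * 2 ^ N →
      |g s / s - g r / r| ≤ Z * (2 + N / 2) := by
  intro N
  induction N with
  | zero =>
    intro r s hr hrs hsN
    have : s = r := le_antisymm (by simpa using hsN) hrs
    rw [this, sub_self, abs_zero]
    push_cast
    linarith
  | succ N ih =>
    intro r s hr hrs hsN
    have hs : 0 < s := hr.trans_le hrs
    by_cases hcase : s ≤ 2 * r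
    · have hμ0 : 0 ≤ r / s := by positivity
      have hμ1 : r / s ≤ 1 := (div_le_one hs).2 hrs
      have hA := dyadic_aux g hg g0 hZ0 hZ hs hμ0 hμ1
      rw [div_mul_cancel₀ _ hs.ne'] at hA
      have hid : g s / s - g r / r = -((g r - r / s * g s) / r) := by
        field_simp; ring
      rw [hid, abs_neg, abs_div, abs_of_pos hr, div_le_iff₀ hr]
      calc |g r - r / s * g s| ≤ Z * s := hA
        _ ≤ Z * (2 + (↑(N + 1) : ℝ) / 2) * r := by
            push_cast
            have hb1 : Z * s ≤ Z * (2 * r) := mul_le_mul_of_nonneg_left hcase hZ0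
            have hb2 : 0 ≤ Z * ((N : ℝ) * r) :=
              mul_nonneg hZ0 (mul_nonneg (Nat.cast_nonneg N) hr.le)
            nlinarith [hb1, hb2]
    · push_neg at hcase
      have h2 := hZ (s / 2) (s / 2) (by positivity)
      have e1 : s / 2 + s / 2 = s := by ring
      have e2 : s / 2 - s / 2 = 0 := by ring
      rw [e1, e2, g0] at h2
      have hhalf : |g s / s - g (s / 2) / (s / 2)| ≤ Z / 2 := by
        have hid : g s / s - g (s / 2) / (s / 2) = (g s + 0 - 2 * g (s / 2)) / s := by
          field_simp; ring
        rw [hid, abs_div, abs_of_pos hs, div_le_iff₀ hs]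
        calc |g s + 0 - 2 * g (s / 2)| ≤ Z * (s / 2) := h2
          _ = Z / 2 * s := by ring
      have hih := ih r (s / 2) hr (by linarith) (by rw [pow_succ] at hsN; linarith)
      calc |g s / s - g r / r|
          ≤ |g s / s - g (s / 2) / (s / 2)| + |g (s / 2) / (s / 2) - g r / r| := abs_sub_le _ _ _
        _ ≤ Z / 2 + Z * (2 + N / 2) := add_le_add hhalf hih
        _ = Z * (2 + (↑(N + 1) : ℝ) / 2) := by push_cast; ring

/-- If `b` is in the class `R₀`, then the two-point quantity for arbitrary
(not necessarily equal-length) increments `h, k` is bounded by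
`C(n) ‖b‖_{R₀} (1 + |log(|h|/|k|)|)`. -/
theorem R0_log_estimate (n : ℕ) :
    ∃ C : ℝ, 0 < C ∧
      ∀ (b : EuclideanSpace ℝ (Fin n) → EuclideanSpace ℝ (Fin n)) (C₀ : ℝ),
        Continuous b →
        (∀ (x h k : EuclideanSpace ℝ (Fin n)), ‖h‖ = ‖k‖ → h ≠ 0 →
          |⟪b (x + h) - b x, k⟫ - ⟪b (x + k) - b x, h⟫| ≤ C₀ * ‖h‖ * ‖k‖) →
        ∀ (x h k : EuclideanSpace ℝ (Fin n)), h ≠ 0 → k ≠ 0 →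
          |⟪b (x + h) - b x, k⟫ - ⟪b (x + k) - b x, h⟫| / (‖h‖ * ‖k‖)
            ≤ C * C₀ * (1 + |Real.log (‖h‖ / ‖k‖)|) := by
  refine ⟨6, by norm_num, ?_⟩
  intro b C₀ hbc hb
  -- C₀ is nonnegative (there exist nonzero vectors whenever the hypothesis is used)
  suffices key : ∀ (x h k : EuclideanSpace ℝ (Fin n)), h ≠ 0 → k ≠ 0 → ‖k‖ ≤ ‖h‖ →
      |⟪b (x + h) - b x, k⟫ - ⟪b (x + k) - b x, h⟫| / (‖h‖ * ‖k‖)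
        ≤ 6 * C₀ * (1 + |Real.log (‖h‖ / ‖k‖)|) by
    intro x h k hh hk
    rcases le_total ‖k‖ ‖h‖ with hle | hle
    · exact key x h k hh hk hle
    · have hswap := key x k h hk hh hle
      have hh' : 0 < ‖h‖ := norm_pos_iff.2 hh
      have hk' : 0 < ‖k‖ := norm_pos_iff.2 hk
      have hlog : Real.log (‖k‖ / ‖h‖) = -Real.log (‖h‖ / ‖k‖) := by
        rw [← Real.log_inv]
        congr 1
        rw [inv_div]
      rw [abs_sub_comm, mul_comm ‖k‖ ‖h‖, hlog, abs_neg] at hswap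
      exact hswap
  intro x h k hh hk hkh
  have hs : 0 < ‖h‖ := norm_pos_iff.2 hh
  have hr : 0 < ‖k‖ := norm_pos_iff.2 hk
  have hC₀ : 0 ≤ C₀ := by
    have h0 := hb x h h rfl hh
    rw [sub_self, abs_zero] at h0
    nlinarith [mul_pos hs hs]
  set s : ℝ := ‖h‖ with hs_def
  set r : ℝ := ‖k‖ with hr_def
  set u : EuclideanSpace ℝ (Fin n) := s⁻¹ • h with hu_def
  set v : EuclideanSpace ℝ (Fin n) := r⁻¹ • k with hv_def
  have hu : ‖u‖ = 1 := by
    rw [hu_def, norm_smul, Real.norm_eq_abs, abs_of_pos (inv_pos.2 hs), ← hs_def,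
      inv_mul_cancel₀ hs.ne']
  have hv : ‖v‖ = 1 := by
    rw [hv_def, norm_smul, Real.norm_eq_abs, abs_of_pos (inv_pos.2 hr), ← hr_def,
      inv_mul_cancel₀ hr.ne']
  have hu0 : u ≠ 0 := by
    intro h0; rw [h0, norm_zero] at hu; norm_num at hu
  clear_value s r u v
  set g : ℝ → ℝ := fun t => ⟪b (x + t • u) - b x, v⟫ with hg_def
  have hgc : Continuous g := by
    apply Continuous.inner
    · exact (hbc.comp (continuous_const.add (continuous_id.smul continuous_const))).sub
        continuous_const
    · exact continuous_const
  have g0 : g 0 = 0 := by simp [hg_def]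
  clear_value g
  -- Zygmund condition for g
  have hZg : ∀ p τ : ℝ, 0 < τ → |g (p + τ) + g (p - τ) - 2 * g p| ≤ (2 * C₀) * τ := by
    intro p τ hτ
    have ha : τ • u ≠ 0 := smul_ne_zero hτ.ne' hu0
    have hnorm : ‖τ • u‖ = ‖τ • v‖ := by rw [norm_smul, norm_smul, hu, hv]
    have hz := zyg_aux b C₀ hb (x + p • u) (τ • u) (τ • v) hnorm ha
    have hrew : ⟪b (x + p • u + τ • u) - b (x + p • u), τ • v⟫
        + ⟪b (x + p • u - τ • u) - b (x + p • u), τ • v⟫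
        = τ * (g (p + τ) + g (p - τ) - 2 * g p) := by
      have e1 : x + p • u + τ • u = x + (p + τ) • u := by rw [add_smul]; abel
      have e2 : x + p • u - τ • u = x + (p - τ) • u := by rw [sub_smul]; abel
      rw [e1, e2]
      simp only [hg_def, real_inner_smul_right, inner_sub_left]
      ring
    rw [hrew] at hz
    have hnval : ‖τ • u‖ * ‖τ • v‖ = τ * τ := by
      rw [norm_smul, norm_smul, hu, hv, Real.norm_eq_abs, abs_of_pos hτ]; ring
    rw [hnval, abs_mul, abs_of_pos hτ] at hz
    have hz' : τ * |g (p + τ) + g (p - τ) - 2 * g p| ≤ τ * (2 * C₀ * τ) := by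
      calc τ * |g (p + τ) + g (p - τ) - 2 * g p| ≤ 2 * C₀ * (τ * τ) := hz
        _ = τ * (2 * C₀ * τ) := by ring
    exact le_of_mul_le_mul_left hz' hτ
  -- choose N
  have hsr1 : 1 ≤ s / r := (one_le_div hr).2 hkh
  have hsrpos : 0 < s / r := by positivity
  set L : ℝ := Real.log (s / r) with hL_def
  have hL0 : 0 ≤ L := Real.log_nonneg hsr1
  set N : ℕ := ⌈Real.logb 2 (s / r)⌉₊ with hN_def
  have hlogb0 : 0 ≤ Real.logb 2 (s / r) := Real.logb_nonneg one_lt_two hsr1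
  have hpowN : s ≤ r * 2 ^ N := by
    have h1 : s / r ≤ (2:ℝ) ^ (N : ℝ) := by
      calc s / r = (2:ℝ) ^ Real.logb 2 (s / r) :=
            (Real.rpow_logb two_pos (by norm_num) hsrpos).symm
        _ ≤ (2:ℝ) ^ (N : ℝ) :=
            Real.rpow_le_rpow_of_exponent_le one_le_two (Nat.le_ceil _)
    rw [Real.rpow_natCast] at h1
    rw [div_le_iff₀ hr] at h1
    linarith
  have hNle : (N : ℝ) ≤ Real.logb 2 (s / r) + 1 := (Nat.ceil_lt_add_one hlogb0).le
  clear_value N L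
  have hlogble : Real.logb 2 (s / r) ≤ 2 * L := by
    rw [Real.logb, ← hL_def, div_le_iff₀ (Real.log_pos one_lt_two)]
    nlinarith [Real.log_two_gt_d9, hL0]
  have hratio := ratio_aux g hgc g0 (by linarith : (0:ℝ) ≤ 2 * C₀) hZg N r s hr hkh hpowN
  -- relate the quantity to g
  have hhu : h = s • u := by rw [hu_def, smul_inv_smul₀ hs.ne']
  have hkv : k = r • v := by rw [hv_def, smul_inv_smul₀ hr.ne']
  set H : ℝ := ⟪b (x + r • v) - b x, u⟫ with hH_def
  clear_value H
  have hB : ⟪b (x + h) - b x, k⟫ - ⟪b (x + k) - b x, h⟫ = r * g s - s * H := by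
    rw [hhu, hkv]
    simp only [hg_def, hH_def, real_inner_smul_right]
    try ring
  have hmid := hb x (r • u) (r • v) (by rw [norm_smul, norm_smul, hu, hv])
    (smul_ne_zero hr.ne' hu0)
  have hmid' : |g r - H| ≤ C₀ * r := by
    have e1 : ⟪b (x + r • u) - b x, r • v⟫ = r * g r := by
      simp only [hg_def]; exact real_inner_smul_right _ _ _
    have e2 : ⟪b (x + r • v) - b x, r • u⟫ = r * H := by
      simp only [hH_def]; exact real_inner_smul_right _ _ _
    rw [e1, e2] at hmid
    have e3 : ‖r • u‖ = r := by rw [norm_smul, hu, Real.norm_eq_abs, abs_of_pos hr]; ring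
    have e4 : ‖r • v‖ = r := by rw [norm_smul, hv, Real.norm_eq_abs, abs_of_pos hr]; ring
    rw [e3, e4] at hmid
    have e5 : r * g r - r * H = r * (g r - H) := by ring
    rw [e5, abs_mul, abs_of_pos hr] at hmid
    have hmid2 : r * |g r - H| ≤ r * (C₀ * r) := by
      calc r * |g r - H| ≤ C₀ * r * r := hmid
        _ = r * (C₀ * r) := by ring
    exact le_of_mul_le_mul_left hmid2 hr
  -- assemble
  rw [hB, abs_of_nonneg hL0, div_le_iff₀ (by positivity : (0:ℝ) < s * r)]
  have hdecomp : r * g s - s * H = r * s * (g s / s - g r / r) + s * (g r - H) := by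
    field_simp
    ring
  have hscal : 2 * C₀ * (2 + (N:ℝ) / 2) + C₀ ≤ 6 * C₀ * (1 + L) := by
    have hN2L : (N : ℝ) ≤ 2 * L + 1 := by linarith
    have p1 : 0 ≤ C₀ * L := mul_nonneg hC₀ hL0
    have p2 : C₀ * (N : ℝ) ≤ C₀ * (2 * L + 1) := mul_le_mul_of_nonneg_left hN2L hC₀
    linarith
  calc |r * g s - s * H|
      = |r * s * (g s / s - g r / r) + s * (g r - H)| := by rw [hdecomp]
    _ ≤ |r * s * (g s / s - g r / r)| + |s * (g r - H)| := abs_add_le _ _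
    _ = r * s * |g s / s - g r / r| + s * |g r - H| := by
        rw [abs_mul (r * s), abs_mul s, abs_of_pos (mul_pos hr hs), abs_of_pos hs]
    _ ≤ r * s * (2 * C₀ * (2 + (N:ℝ) / 2)) + s * (C₀ * r) := by
        apply add_le_add
        · exact mul_le_mul_of_nonneg_left hratio (by positivity)
        · exact mul_le_mul_of_nonneg_left hmid' hs.le
    _ = (2 * C₀ * (2 + (N:ℝ) / 2) + C₀) * (s * r) := by ring
    _ ≤ 6 * C₀ * (1 + L) * (s * r) := by
        apply mul_le_mul_of_nonneg_right hscal (by positivity)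
end

section
/- Let n ≥ 3 and let b : ℝ^n → ℝ^n be differentiable at x. Suppose that for every J in the set 𝒥_n ∪ {Id} of coordinate-plane rotation matrices together with the identity, one has |⟨Db(x)h, Jk⟩ − ⟨Db(x)k, Jh⟩| ≤ C₀ |h||k| for all h, k. Then |Db(x)| ≤ C(n) C₀ for a dimensional constant C(n); i.e. the full differential (not just its antisymmetric part) is controlled. -/
open scoped RealInnerProductSpace

/-- The coordinate-plane rotation `J_{i,j}` on `ℝⁿ`: `J e_i = −e_j`, `J e_j = e_i`,
and `J e_l = e_l` for `l ≠ i, j`.  In coordinates, `(Jx)_i = x_j`, `(Jx)_j = −x_i`,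
`(Jx)_l = x_l` otherwise. -/
noncomputable def Jmap (n : ℕ) (i j : Fin n) :
    EuclideanSpace ℝ (Fin n) → EuclideanSpace ℝ (Fin n) := fun x =>
  (EuclideanSpace.equiv (Fin n) ℝ).symm
    (fun l => if l = i then x j else if l = j then -(x i) else x l)

lemma Jmap_apply' (n : ℕ) (i j : Fin n) (x : EuclideanSpace ℝ (Fin n)) (l : Fin n) :
    Jmap n i j x l = if l = i then x j else if l = j then -(x i) else x l := rfl

lemma Jmap_single_fst' {n : ℕ} {i j : Fin n} (hij : i ≠ j) :
    Jmap n i j (EuclideanSpace.single i 1) = -(EuclideanSpace.single j (1:ℝ)) := by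
  ext l
  simp only [Jmap_apply', EuclideanSpace.single_apply, PiLp.neg_apply]
  split_ifs with h1 h2 <;> simp_all

lemma Jmap_single_snd' {n : ℕ} {i j : Fin n} (hij : i ≠ j) :
    Jmap n i j (EuclideanSpace.single j 1) = EuclideanSpace.single i (1:ℝ) := by
  ext l
  simp only [Jmap_apply', EuclideanSpace.single_apply]
  split_ifs with h1 h2 <;> simp_all

lemma Jmap_single_other' {n : ℕ} {i j m : Fin n} (hi : m ≠ i) (hj : m ≠ j) :
    Jmap n i j (EuclideanSpace.single m 1) = EuclideanSpace.single m (1:ℝ) := by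
  ext l
  simp only [Jmap_apply', EuclideanSpace.single_apply]
  split_ifs with h1 h2 <;> simp_all

lemma exists_third' {n : ℕ} (hn : 3 ≤ n) (p q : Fin n) : ∃ r : Fin n, r ≠ p ∧ r ≠ q := by
  by_contra hcon
  push_neg at hcon
  have hsub : (Finset.univ : Finset (Fin n)) ⊆ {p, q} := by
    intro r _
    simp only [Finset.mem_insert, Finset.mem_singleton]
    by_cases h : r = p
    · exact Or.inl h
    · exact Or.inr (hcon r h)
  have h1 := Finset.card_le_card hsub
  have h2 : ({p, q} : Finset (Fin n)).card ≤ 2 :=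
    (Finset.card_insert_le _ _).trans (by simp)
  simp [Finset.card_univ] at h1
  omega

/-- For `n ≥ 3`, if `b` is differentiable at `x` and the rotated two-point bound
holds for the identity and all coordinate-plane rotations `J_{i,j}`, `i < j`, then
the full differential is controlled: `|Db(x)| ≤ C(n) C₀`. -/
theorem rotations_control_full_differential (n : ℕ) (hn : 3 ≤ n) :
    ∃ C : ℝ, 0 < C ∧
      ∀ (b : EuclideanSpace ℝ (Fin n) → EuclideanSpace ℝ (Fin n))
        (x : EuclideanSpace ℝ (Fin n)) (C₀ : ℝ),
        DifferentiableAt ℝ b x →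
        (∀ h k : EuclideanSpace ℝ (Fin n),
          |⟪fderiv ℝ b x h, k⟫ - ⟪fderiv ℝ b x k, h⟫| ≤ C₀ * ‖h‖ * ‖k‖) →
        (∀ i j : Fin n, i < j → ∀ h k : EuclideanSpace ℝ (Fin n),
          |⟪fderiv ℝ b x h, Jmap n i j k⟫ - ⟪fderiv ℝ b x k, Jmap n i j h⟫|
            ≤ C₀ * ‖h‖ * ‖k‖) →
        ‖fderiv ℝ b x‖ ≤ C * C₀ := by
  have hnpos : (0:ℝ) < n := by exact_mod_cast (by omega : 0 < n)
  refine ⟨2 * n ^ 2, by positivity, ?_⟩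
  intro b x C₀ hdiff hid hrot
  set A := fderiv ℝ b x with hA
  have hnorm1 : ∀ p : Fin n, ‖(EuclideanSpace.single p 1 : EuclideanSpace ℝ (Fin n))‖ = 1 := by
    intro p; simp
  have hinner1 : ∀ (v : EuclideanSpace ℝ (Fin n)) (p : Fin n),
      ⟪v, EuclideanSpace.single p 1⟫ = v p := by
    intro v p
    simp [EuclideanSpace.inner_single_right]
  set a : Fin n → Fin n → ℝ := fun p q => (A (EuclideanSpace.single q 1)) p with ha_def
  -- C₀ is nonnegative
  have hC₀ : 0 ≤ C₀ := by
    have h0 := hid (EuclideanSpace.single ⟨0, by omega⟩ 1) (EuclideanSpace.single ⟨0, by omega⟩ 1)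
    rw [sub_self, abs_zero, hnorm1] at h0
    linarith
  -- antisymmetric part bound (identity map)
  have hsym : ∀ p q : Fin n, |a p q - a q p| ≤ C₀ := by
    intro p q
    have h0 := hid (EuclideanSpace.single q 1) (EuclideanSpace.single p 1)
    simp only [hinner1, hnorm1, mul_one] at h0
    simpa [ha_def] using h0
  -- diagonal pair bound
  have hdiagpair : ∀ p q : Fin n, p ≠ q → |a p p + a q q| ≤ C₀ := by
    intro p q hpq
    rcases lt_or_gt_of_ne hpq with h | h
    · have h0 := hrot p q h (EuclideanSpace.single p 1) (EuclideanSpace.single q 1)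
      rw [Jmap_single_snd' hpq, Jmap_single_fst' hpq, inner_neg_right] at h0
      simp only [hinner1, hnorm1, mul_one] at h0
      simpa [ha_def, sub_neg_eq_add, add_comm] using h0
    · have h0 := hrot q p h (EuclideanSpace.single q 1) (EuclideanSpace.single p 1)
      rw [Jmap_single_snd' hpq.symm, Jmap_single_fst' hpq.symm, inner_neg_right] at h0
      simp only [hinner1, hnorm1, mul_one] at h0
      simpa [ha_def, sub_neg_eq_add, add_comm] using h0
  -- diagonal bound
  have hdiag : ∀ p : Fin n, |a p p| ≤ 2 * C₀ := by
    intro p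
    obtain ⟨q, hqp, _⟩ := exists_third' hn p p
    obtain ⟨r, hrp, hrq⟩ := exists_third' hn p q
    have h1 := abs_le.mp (hdiagpair p q (Ne.symm hqp))
    have h2 := abs_le.mp (hdiagpair p r (Ne.symm hrp))
    have h3 := abs_le.mp (hdiagpair q r (Ne.symm hrq))
    rw [abs_le]
    constructor <;> nlinarith
  -- off-diagonal bound
  have hoff : ∀ p q : Fin n, p ≠ q → |a p q| ≤ 2 * C₀ := by
    intro p q hpq
    obtain ⟨r, hrp, hrq⟩ := exists_third' hn p q
    rcases lt_or_gt_of_ne (Ne.symm hrq) with h | h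
    · -- q < r, plane (q, r)
      have hb1 := hrot q r h (EuclideanSpace.single q 1) (EuclideanSpace.single p 1)
      rw [Jmap_single_other' hpq (Ne.symm hrp), Jmap_single_fst' (Ne.symm hrq),
        inner_neg_right] at hb1
      simp only [hinner1, hnorm1, mul_one] at hb1
      have hb2 := hrot q r h (EuclideanSpace.single r 1) (EuclideanSpace.single p 1)
      rw [Jmap_single_other' hpq (Ne.symm hrp), Jmap_single_snd' (Ne.symm hrq)] at hb2
      simp only [hinner1, hnorm1, mul_one] at hb2
      have h1 : |a p q + a r p| ≤ C₀ := by
        simpa [ha_def, sub_neg_eq_add] using hb1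
      have h2 : |a p r - a q p| ≤ C₀ := by simpa [ha_def] using hb2
      have h3 := abs_le.mp (hsym r p)
      have h4 := abs_le.mp (hsym q p)
      have h1' := abs_le.mp h1
      have h2' := abs_le.mp h2
      rw [abs_le]; constructor <;> nlinarith
    · -- r < q, plane (r, q)
      have hb1 := hrot r q h (EuclideanSpace.single q 1) (EuclideanSpace.single p 1)
      rw [Jmap_single_other' (Ne.symm hrp) hpq, Jmap_single_snd' hrq] at hb1
      simp only [hinner1, hnorm1, mul_one] at hb1
      have hb2 := hrot r q h (EuclideanSpace.single r 1) (EuclideanSpace.single p 1)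
      rw [Jmap_single_other' (Ne.symm hrp) hpq, Jmap_single_fst' hrq,
        inner_neg_right] at hb2
      simp only [hinner1, hnorm1, mul_one] at hb2
      have h1 : |a p q - a r p| ≤ C₀ := by simpa [ha_def] using hb1
      have h2 : |a p r + a q p| ≤ C₀ := by
        simpa [ha_def, sub_neg_eq_add] using hb2
      have h3 := abs_le.mp (hsym r p)
      have h4 := abs_le.mp (hsym q p)
      have h1' := abs_le.mp h1
      have h2' := abs_le.mp h2
      rw [abs_le]; constructor <;> nlinarith
  -- all entries are bounded
  have hentry : ∀ p q : Fin n, |a p q| ≤ 2 * C₀ := by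
    intro p q
    by_cases hpq : p = q
    · subst hpq; exact hdiag p
    · exact hoff p q hpq
  -- basis decomposition
  have hdecomp : ∀ v : EuclideanSpace ℝ (Fin n),
      v = ∑ q, v q • EuclideanSpace.single q (1:ℝ) := by
    intro v
    ext l
    rw [WithLp.ofLp_sum, Finset.sum_apply]
    simp [EuclideanSpace.single_apply, mul_ite, Finset.sum_ite_eq]
  -- coordinates are bounded by the norm
  have hcoord : ∀ (v : EuclideanSpace ℝ (Fin n)) (q : Fin n), |v q| ≤ ‖v‖ := by
    intro v q
    have h1 : ⟪(EuclideanSpace.single q 1 : EuclideanSpace ℝ (Fin n)), v⟫ = v q := by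
      simp [EuclideanSpace.inner_single_left]
    calc |v q| = |⟪(EuclideanSpace.single q 1 : EuclideanSpace ℝ (Fin n)), v⟫| := by rw [h1]
      _ ≤ ‖(EuclideanSpace.single q 1 : EuclideanSpace ℝ (Fin n))‖ * ‖v‖ :=
          abs_real_inner_le_norm _ _
      _ = ‖v‖ := by rw [hnorm1]; ring
  -- A in coordinates
  have hAapply : ∀ (v : EuclideanSpace ℝ (Fin n)) (p : Fin n),
      A v p = ∑ q, v q * a p q := by
    intro v p
    conv_lhs => rw [hdecomp v]
    rw [map_sum]
    rw [show ((∑ q, A (v q • EuclideanSpace.single q (1:ℝ))) p)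
        = ∑ q, (A (v q • EuclideanSpace.single q (1:ℝ))) p by rw [WithLp.ofLp_sum, Finset.sum_apply]]
    refine Finset.sum_congr rfl fun q _ => ?_
    rw [map_smul]
    simp [ha_def]
  -- norm is bounded by the l¹ norm
  have hnormle : ∀ v : EuclideanSpace ℝ (Fin n), ‖v‖ ≤ ∑ p, |v p| := by
    intro v
    calc ‖v‖ = ‖∑ p, v p • EuclideanSpace.single p (1:ℝ)‖ := by rw [← hdecomp v]
      _ ≤ ∑ p, ‖v p • EuclideanSpace.single p (1:ℝ)‖ := norm_sum_le _ _
      _ = ∑ p, |v p| := by simp [norm_smul, hnorm1]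
  -- conclusion
  refine A.opNorm_le_bound (mul_nonneg (by positivity) hC₀) fun v => ?_
  calc ‖A v‖ ≤ ∑ p, |A v p| := hnormle _
    _ ≤ ∑ _p : Fin n, ∑ _q : Fin n, ‖v‖ * (2 * C₀) := by
        apply Finset.sum_le_sum
        intro p _
        rw [hAapply]
        refine (Finset.abs_sum_le_sum_abs _ _).trans ?_
        apply Finset.sum_le_sum
        intro q _
        rw [abs_mul]
        exact mul_le_mul (hcoord v q) (hentry p q) (abs_nonneg _) (norm_nonneg _)
    _ = 2 * (n:ℝ) ^ 2 * C₀ * ‖v‖ := by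
        simp [Finset.sum_const, Finset.card_univ]
        ring
end
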